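/- Let g₁, g₂, g₃ ∈ Homeo₊(ℝ) and h : (-∞,p] → (-∞,h(p)] a partial solution of the equation X g₁ X g₂ X g₃ = id. If there exist i, j ∈ {1,2,3} with g_i(e_h) ≠ g_j(e_h), then h extends to a partial solution h' defined on (-∞, p+ε] for some ε > 0. -/

import Mathlib

open Set

/-- `h` is a partial solution of the equation (E) `X g₁ X g₂ X g₃ = id` on the
domain `(-∞, p]`: an increasing homeomorphism of `(-∞, p]` onto a lower set
(of the form `(-∞, h(p)]`), satisfying the equation wherever the composition is
defined. -/
def IsPartialSolution (g₁ g₂ g₃ : ℝ ≃o ℝ) (p : ℝ) (h : ℝ → ℝ) : Prop :=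
  StrictMonoOn h (Iic p) ∧ IsLowerSet (h '' Iic p) ∧
  ∀ x : ℝ, g₃ x ≤ p → g₂ (h (g₃ x)) ≤ p → g₁ (h (g₂ (h (g₃ x)))) ≤ p →
    h (g₁ (h (g₂ (h (g₃ x))))) = x

/-- The domain of the composition `h g₁ h g₂ h g₃`, an interval `(-∞, e_h]`. -/
def compDomain (g₁ g₂ g₃ : ℝ ≃o ℝ) (p : ℝ) (h : ℝ → ℝ) : Set ℝ :=
  {x | g₃ x ≤ p ∧ g₂ (h (g₃ x)) ≤ p ∧ g₁ (h (g₂ (h (g₃ x)))) ≤ p}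


noncomputable section PSsqrt
open scoped Classical

/-- fixed point set -/
def fixS (Φ : ℝ ≃o ℝ) : Set ℝ := {x : ℝ | Φ x = x}

lemma isClosed_fixS (Φ : ℝ ≃o ℝ) : IsClosed (fixS Φ) :=
  isClosed_eq Φ.continuous continuous_id

def aF (Φ : ℝ ≃o ℝ) (x : ℝ) : ℝ := sSup (fixS Φ ∩ Iic x)
def bF (Φ : ℝ ≃o ℝ) (x : ℝ) : ℝ := sInf (fixS Φ ∩ Ici x)
def mF (Φ : ℝ ≃o ℝ) (x : ℝ) : ℝ := (aF Φ x + bF Φ x) / 2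
def cF (Φ : ℝ ≃o ℝ) (x : ℝ) : ℝ := (mF Φ x + Φ (mF Φ x)) / 2

lemma zpow_apply_add (Φ : ℝ ≃o ℝ) (a b : ℤ) (x : ℝ) :
    (Φ^(a+b)) x = (Φ^a) ((Φ^b) x) := by rw [zpow_add]; rfl

lemma zpow_apply_cancel (Φ : ℝ ≃o ℝ) (a : ℤ) (x : ℝ) : (Φ^(-a)) ((Φ^a) x) = x := by
  rw [← zpow_apply_add]; simp

lemma zpow_apply_cancel' (Φ : ℝ ≃o ℝ) (a : ℤ) (x : ℝ) : (Φ^a) ((Φ^(-a)) x) = x := by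
  rw [← zpow_apply_add]; simp

lemma zpow_apply_succ (Φ : ℝ ≃o ℝ) (n : ℤ) (x : ℝ) :
    Φ ((Φ^n) x) = (Φ^(n+1)) x := by
  rw [show n+1 = 1+n by ring, zpow_apply_add, zpow_one]

lemma zpow_fix (Φ : ℝ ≃o ℝ) (n : ℤ) {x : ℝ} (hx : Φ x = x) : (Φ^n) x = x := by
  induction n using Int.induction_on with
  | zero => simp
  | succ k ih => rw [show (k:ℤ)+1 = 1+k by ring, zpow_apply_add, ih, zpow_one, hx]
  | pred k ih => rw [show -(k:ℤ)-1 = (-(k:ℤ)-1+1)+(-1) by ring, zpow_apply_add]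
                 simp only [zpow_neg_one]
                 rw [show -(k:ℤ)-1+1 = -k by ring, show (Φ⁻¹ : ℝ ≃o ℝ) x = Φ.symm x from rfl]
                 rw [(Φ.symm_apply_eq).mpr hx.symm, ih]

section hyps
variable {Φ : ℝ ≃o ℝ} {l u : ℝ}

lemma aF_mem (hl : ∀ x ≤ l, Φ x = x) {x : ℝ} (hx : Φ x ≠ x) : aF Φ x ∈ fixS Φ ∧ aF Φ x < x := by
  have hlx : l < x := by
    by_contra hcon; push_neg at hcon; exact hx (hl x hcon)
  have hne : (fixS Φ ∩ Iic x).Nonempty := ⟨l, hl l le_rfl, le_of_lt hlx⟩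
  have hbdd : BddAbove (fixS Φ ∩ Iic x) := ⟨x, fun y hy => hy.2⟩
  have hmem := IsClosed.csSup_mem ((isClosed_fixS Φ).inter isClosed_Iic) hne hbdd
  refine ⟨hmem.1, lt_of_le_of_ne hmem.2 ?_⟩
  intro he; exact hx (he ▸ hmem.1)

lemma bF_mem (hu : ∀ x, u ≤ x → Φ x = x) {x : ℝ} (hx : Φ x ≠ x) : bF Φ x ∈ fixS Φ ∧ x < bF Φ x := by
  have hxu : x < u := by
    by_contra hcon; push_neg at hcon; exact hx (hu x hcon)
  have hne : (fixS Φ ∩ Ici x).Nonempty := ⟨u, hu u le_rfl, le_of_lt hxu⟩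
  have hbdd : BddBelow (fixS Φ ∩ Ici x) := ⟨x, fun y hy => hy.2⟩
  have hmem := IsClosed.csInf_mem ((isClosed_fixS Φ).inter isClosed_Ici) hne hbdd
  refine ⟨hmem.1, lt_of_le_of_ne hmem.2 ?_⟩
  intro he; exact hx (he ▸ hmem.1)

lemma no_fix_between {x : ℝ} (hx : Φ x ≠ x) :
    ∀ y, aF Φ x < y → y < bF Φ x → Φ y ≠ y := by
  intro y h1 h2 hy
  rcases le_or_gt y x with h3 | h3
  · have : y ≤ aF Φ x := le_csSup ⟨x, fun w hw => hw.2⟩ ⟨hy, h3⟩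
    linarith
  · have : bF Φ x ≤ y := csInf_le ⟨x, fun w hw => hw.2⟩ ⟨hy, le_of_lt h3⟩
    linarith

lemma comp_eq (hl : ∀ x ≤ l, Φ x = x) (hu : ∀ x, u ≤ x → Φ x = x) {x : ℝ} (hx : Φ x ≠ x) {y : ℝ}
    (h1 : aF Φ x < y) (h2 : y < bF Φ x) :
    aF Φ y = aF Φ x ∧ bF Φ y = bF Φ x := by
  have haf := (aF_mem hl hx).1
  have hbf := (bF_mem hu hx).1
  constructor
  · apply le_antisymm
    · have : sSup (fixS Φ ∩ Iic y) ≤ aF Φ x := by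
        apply csSup_le ⟨aF Φ x, Set.mem_inter haf (show aF Φ x ∈ Iic y from le_of_lt h1)⟩
        intro b hb
        by_contra hcon; push_neg at hcon
        exact no_fix_between hx b hcon (lt_of_le_of_lt hb.2 h2) hb.1
      exact this
    · have : aF Φ x ≤ sSup (fixS Φ ∩ Iic y) :=
        le_csSup ⟨y, fun w hw => hw.2⟩ (Set.mem_inter haf (show aF Φ x ∈ Iic y from le_of_lt h1))
      exact this
  · apply le_antisymm
    · have : sInf (fixS Φ ∩ Ici y) ≤ bF Φ x :=
        csInf_le ⟨y, fun w hw => hw.2⟩ (Set.mem_inter hbf (show bF Φ x ∈ Ici y from le_of_lt h2))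
      exact this
    · have : bF Φ x ≤ sInf (fixS Φ ∩ Ici y) := by
        apply le_csInf ⟨bF Φ x, Set.mem_inter hbf (show bF Φ x ∈ Ici y from le_of_lt h2)⟩
        intro b hb
        by_contra hcon; push_neg at hcon
        exact no_fix_between hx b (lt_of_lt_of_le h1 hb.2) hcon hb.1
      exact this

lemma mF_comp_eq (hl : ∀ x ≤ l, Φ x = x) (hu : ∀ x, u ≤ x → Φ x = x) {x : ℝ} (hx : Φ x ≠ x) {y : ℝ}
    (h1 : aF Φ x < y) (h2 : y < bF Φ x) :
    mF Φ y = mF Φ x ∧ cF Φ y = cF Φ x := by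
  obtain ⟨e1, e2⟩ := comp_eq hl hu hx h1 h2
  have : mF Φ y = mF Φ x := by rw [mF, mF, e1, e2]
  exact ⟨this, by rw [cF, cF, this]⟩

lemma mF_mem (hl : ∀ x ≤ l, Φ x = x) (hu : ∀ x, u ≤ x → Φ x = x) {x : ℝ} (hx : Φ x ≠ x) : aF Φ x < mF Φ x ∧ mF Φ x < bF Φ x := by
  have h1 := (aF_mem hl hx).2
  have h2 := (bF_mem hu hx).2
  constructor <;> (rw [mF]; linarith)

lemma mF_lt (hΦ : ∀ x : ℝ, x ≤ Φ x) (hl : ∀ x ≤ l, Φ x = x) (hu : ∀ x, u ≤ x → Φ x = x) {x : ℝ} (hx : Φ x ≠ x) : mF Φ x < Φ (mF Φ x) := by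
  obtain ⟨h1, h2⟩ := mF_mem hl hu hx
  exact lt_of_le_of_ne (hΦ _) (Ne.symm (no_fix_between hx _ h1 h2))

lemma cF_mem (hΦ : ∀ x : ℝ, x ≤ Φ x) (hl : ∀ x ≤ l, Φ x = x) (hu : ∀ x, u ≤ x → Φ x = x) {x : ℝ} (hx : Φ x ≠ x) : mF Φ x < cF Φ x ∧ cF Φ x < Φ (mF Φ x) := by
  have := mF_lt hΦ hl hu hx
  constructor <;> (rw [cF]; linarith)

lemma zpow_mem' (hl : ∀ x ≤ l, Φ x = x) (hu : ∀ x, u ≤ x → Φ x = x) {x : ℝ} (hx : Φ x ≠ x) (n : ℤ) {y : ℝ}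
    (h1 : aF Φ x < y) (h2 : y < bF Φ x) :
    aF Φ x < (Φ^n) y ∧ (Φ^n) y < bF Φ x := by
  have haf : (Φ^n) (aF Φ x) = aF Φ x := zpow_fix Φ n (aF_mem hl hx).1
  have hbf : (Φ^n) (bF Φ x) = bF Φ x := zpow_fix Φ n (bF_mem hu hx).1
  exact ⟨haf ▸ (Φ^n).strictMono h1, hbf ▸ (Φ^n).strictMono h2⟩

lemma orbit_mono {w : ℝ} (hw : w < Φ w) : StrictMono (fun n : ℤ => (Φ^n) w) := by
  apply strictMono_int_of_lt_succ
  intro n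
  have : (Φ^(n+1)) w = (Φ^n) (Φ w) := by
    rw [zpow_apply_add Φ n 1]; norm_num
  rw [this]
  exact (Φ^n).strictMono hw

lemma exists_n (hΦ : ∀ x : ℝ, x ≤ Φ x) (hl : ∀ x ≤ l, Φ x = x) (hu : ∀ x, u ≤ x → Φ x = x) {x : ℝ} (hx : Φ x ≠ x) {z : ℝ}
    (hz1 : aF Φ x < z) (hz2 : z < bF Φ x) :
    ∃ n : ℤ, (Φ^n) (mF Φ x) ≤ z ∧ z < (Φ^(n+1)) (mF Φ x) := by
  set m := mF Φ x with hm
  have hmm := mF_mem hl hu hx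
  have hmlt := mF_lt hΦ hl hu hx
  have htmono : StrictMono (fun n : ℤ => (Φ^n) m) := orbit_mono hmlt
  -- part 1 : some orbit point is ≤ z
  have part1 : ∃ n : ℤ, (Φ^n) m ≤ z := by
    by_contra hcon; push_neg at hcon
    set L := sInf (range fun n : ℤ => (Φ^n) m) with hL
    have hne : (range fun n : ℤ => (Φ^n) m).Nonempty := ⟨(Φ^(0:ℤ)) m, ⟨0, rfl⟩⟩
    have hbdd : BddBelow (range fun n : ℤ => (Φ^n) m) :=
      ⟨z, fun w ⟨n, hn⟩ => hn ▸ le_of_lt (hcon n)⟩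
    have hzL : z ≤ L := le_csInf hne (fun w ⟨n, hn⟩ => hn ▸ le_of_lt (hcon n))
    have hLm : L ≤ m := csInf_le hbdd ⟨0, by simp⟩
    have hfix : Φ L = L := by
      refine le_antisymm ?_ (hΦ L)
      apply le_csInf hne
      rintro w ⟨n, hn⟩
      have h5 : L ≤ (Φ^(n-1)) m := csInf_le hbdd ⟨n-1, rfl⟩
      have h7 := Φ.monotone h5
      have hn' : (Φ^n) m = w := hn
      rwa [zpow_apply_succ, show n-1+1 = n by ring, hn'] at h7
    exact no_fix_between hx L (lt_of_lt_of_le hz1 hzL) (lt_of_le_of_lt hLm hmm.2) hfix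
  -- part 2 : some orbit point is > z
  have part2 : ∃ n : ℤ, z < (Φ^n) m := by
    by_contra hcon; push_neg at hcon
    set U := sSup (range fun n : ℤ => (Φ^n) m) with hU
    have hne : (range fun n : ℤ => (Φ^n) m).Nonempty := ⟨(Φ^(0:ℤ)) m, ⟨0, rfl⟩⟩
    have hbdd : BddAbove (range fun n : ℤ => (Φ^n) m) :=
      ⟨z, fun w ⟨n, hn⟩ => hn ▸ hcon n⟩
    have hUz : U ≤ z := csSup_le hne (fun w ⟨n, hn⟩ => hn ▸ hcon n)
    have hmU : m ≤ U := le_csSup hbdd ⟨0, by simp⟩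
    have hfix : Φ U = U := by
      refine le_antisymm ?_ (hΦ U)
      have h6 : ∀ w ∈ (range fun n : ℤ => (Φ^n) m), w ≤ Φ.symm U := by
        rintro w ⟨n, hn⟩
        have h5 : (Φ^(n+1)) m ≤ U := le_csSup hbdd ⟨n+1, rfl⟩
        rw [← hn]
        rw [Φ.le_symm_apply]
        rwa [zpow_apply_succ]
      have := csSup_le hne h6
      rwa [← Φ.le_symm_apply]
    exact no_fix_between hx U (lt_of_lt_of_le hmm.1 hmU)
      (lt_of_le_of_lt hUz hz2) hfix
  obtain ⟨N, hN⟩ := part2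
  have hbdd2 : ∃ b : ℤ, ∀ n : ℤ, (Φ^n) m ≤ z → n ≤ b := by
    refine ⟨N, fun n hn => ?_⟩
    by_contra hcon; push_neg at hcon
    have := htmono.monotone (le_of_lt hcon)
    linarith
  obtain ⟨n₀, hn₀, hgreatest⟩ := Int.exists_greatest_of_bdd hbdd2 part1
  refine ⟨n₀, hn₀, ?_⟩
  by_contra hcon; push_neg at hcon
  have := hgreatest (n₀+1) hcon
  linarith

end hyps

/-- affine map sending `[m,c]` onto `[c,d]` -/
def aff (m c d y : ℝ) : ℝ := c + (y - m) * ((d - c) / (c - m))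
def affInv (m c d z : ℝ) : ℝ := m + (z - c) * ((c - m) / (d - c))

section affine
variable {m c d : ℝ}

lemma aff_left : aff m c d m = c := by simp [aff]
lemma aff_right (hm : m < c) : aff m c d c = d := by
  rw [aff, mul_comm, div_mul_cancel₀ _ (by linarith : c - m ≠ 0)]; ring
lemma aff_mono (hm : m < c) (hd : c < d) : StrictMono (aff m c d) := by
  intro a b hab
  have hk : (0:ℝ) < (d - c)/(c - m) := div_pos (by linarith) (by linarith)
  simp only [aff]
  have := mul_lt_mul_of_pos_right (show a - m < b - m by linarith) hk
  linarith
lemma affInv_aff (hm : m < c) (hd : c < d) (y : ℝ) : affInv m c d (aff m c d y) = y := by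
  rw [aff, affInv]
  have h1 : c - m ≠ 0 := by linarith
  have h2 : d - c ≠ 0 := by linarith
  field_simp
  ring
lemma aff_affInv (hm : m < c) (hd : c < d) (z : ℝ) : aff m c d (affInv m c d z) = z := by
  rw [aff, affInv]
  have h1 : c - m ≠ 0 := by linarith
  have h2 : d - c ≠ 0 := by linarith
  field_simp
  ring
lemma affInv_mono (hm : m < c) (hd : c < d) : StrictMono (affInv m c d) := by
  intro a b hab
  have hk : (0:ℝ) < (c - m)/(d - c) := div_pos (by linarith) (by linarith)
  simp only [affInv]
  have := mul_lt_mul_of_pos_right (show a - c < b - c by linarith) hk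
  linarith
lemma affInv_left : affInv m c d c = m := by simp [affInv]
lemma affInv_right (hd : c < d) : affInv m c d d = c := by
  rw [affInv, mul_comm, div_mul_cancel₀ _ (by linarith : d - c ≠ 0)]; ring

end affine

/-- index of the fundamental domain containing `x` -/
def nF (Φ : ℝ ≃o ℝ) (x : ℝ) : ℤ :=
  if hn : ∃ n : ℤ, (Φ^n) (mF Φ x) ≤ x ∧ x < (Φ^(n+1)) (mF Φ x) then hn.choose else 0

/-- square root candidate -/
def sqF (Φ : ℝ ≃o ℝ) (x : ℝ) : ℝ :=
  if Φ x = x then x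
  else if (Φ^(-(nF Φ x))) x < cF Φ x
    then (Φ^(nF Φ x)) (aff (mF Φ x) (cF Φ x) (Φ (mF Φ x)) ((Φ^(-(nF Φ x))) x))
    else (Φ^(nF Φ x)) (Φ (affInv (mF Φ x) (cF Φ x) (Φ (mF Φ x)) ((Φ^(-(nF Φ x))) x)))

lemma sqF_fix (Φ : ℝ ≃o ℝ) {x : ℝ} (hx : Φ x = x) : sqF Φ x = x := if_pos hx

section hyps2
variable {Φ : ℝ ≃o ℝ} {l u : ℝ}

lemma nF_spec (hΦ : ∀ x : ℝ, x ≤ Φ x) (hl : ∀ x ≤ l, Φ x = x) (hu : ∀ x, u ≤ x → Φ x = x)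
    {x : ℝ} (hx : Φ x ≠ x) :
    (Φ^(nF Φ x)) (mF Φ x) ≤ x ∧ x < (Φ^(nF Φ x + 1)) (mF Φ x) := by
  have hex := exists_n hΦ hl hu hx (aF_mem hl hx).2 (bF_mem hu hx).2
  rw [nF, dif_pos hex]
  exact hex.choose_spec

lemma nF_eq (hΦ : ∀ x : ℝ, x ≤ Φ x) (hl : ∀ x ≤ l, Φ x = x) (hu : ∀ x, u ≤ x → Φ x = x)
    {x : ℝ} (hx : Φ x ≠ x) {k : ℤ}
    (h1 : (Φ^k) (mF Φ x) ≤ x) (h2 : x < (Φ^(k+1)) (mF Φ x)) : nF Φ x = k := by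
  obtain ⟨s1, s2⟩ := nF_spec hΦ hl hu hx
  have hmlt := mF_lt hΦ hl hu hx
  have htmono := orbit_mono (Φ := Φ) hmlt
  have c1 : nF Φ x < k + 1 := by
    have := lt_of_le_of_lt s1 h2
    exact htmono.lt_iff_lt.mp this
  have c2 : k < nF Φ x + 1 := by
    have := lt_of_le_of_lt h1 s2
    exact htmono.lt_iff_lt.mp this
  omega

/-- all the data of the branch decomposition at a non-fixed point -/
lemma sqF_spec (hΦ : ∀ x : ℝ, x ≤ Φ x) (hl : ∀ x ≤ l, Φ x = x) (hu : ∀ x, u ≤ x → Φ x = x)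
    {x : ℝ} (hx : Φ x ≠ x) :
    mF Φ x ≤ (Φ^(-(nF Φ x))) x ∧ (Φ^(-(nF Φ x))) x < Φ (mF Φ x) := by
  obtain ⟨s1, s2⟩ := nF_spec hΦ hl hu hx
  constructor
  · have := (Φ^(-(nF Φ x))).monotone s1
    rwa [zpow_apply_cancel] at this
  · have := (Φ^(-(nF Φ x))).strictMono s2
    rwa [show (Φ^(-(nF Φ x))) ((Φ^(nF Φ x + 1)) (mF Φ x)) = Φ (mF Φ x) by
      rw [← zpow_apply_add, show -(nF Φ x) + (nF Φ x + 1) = 1 by ring, zpow_one]] at this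

lemma sqF_branch1 {x : ℝ} (hx : ¬ Φ x = x) (hy : (Φ^(-(nF Φ x))) x < cF Φ x) :
    sqF Φ x = (Φ^(nF Φ x)) (aff (mF Φ x) (cF Φ x) (Φ (mF Φ x)) ((Φ^(-(nF Φ x))) x)) := by
  simp only [sqF, if_neg hx, if_pos hy]

lemma sqF_branch2 {x : ℝ} (hx : ¬ Φ x = x) (hy : ¬ ((Φ^(-(nF Φ x))) x < cF Φ x)) :
    sqF Φ x = (Φ^(nF Φ x)) (Φ (affInv (mF Φ x) (cF Φ x) (Φ (mF Φ x)) ((Φ^(-(nF Φ x))) x))) := by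
  simp only [sqF, if_neg hx, if_neg hy]

variable (hΦ : ∀ x : ℝ, x ≤ Φ x) (hl : ∀ x ≤ l, Φ x = x) (hu : ∀ x, u ≤ x → Φ x = x)

lemma sqF_bounds (hΦ : ∀ x : ℝ, x ≤ Φ x) (hl : ∀ x ≤ l, Φ x = x) (hu : ∀ x, u ≤ x → Φ x = x)
    {x : ℝ} (hx : Φ x ≠ x) :
    (Φ^(nF Φ x)) (cF Φ x) ≤ sqF Φ x ∧ sqF Φ x < (Φ^(nF Φ x + 1)) (cF Φ x) := by
  obtain ⟨hmc, hcd⟩ := cF_mem hΦ hl hu hx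
  obtain ⟨hsp1, hsp2⟩ := sqF_spec hΦ hl hu hx
  have hsucc : (Φ^(nF Φ x + 1)) (cF Φ x) = (Φ^(nF Φ x)) (Φ (cF Φ x)) := by
    rw [zpow_apply_add, zpow_one]
  by_cases hy : (Φ^(-(nF Φ x))) x < cF Φ x
  · rw [sqF_branch1 hx hy]
    constructor
    · apply (Φ^(nF Φ x)).monotone
      calc cF Φ x = aff (mF Φ x) (cF Φ x) (Φ (mF Φ x)) (mF Φ x) := aff_left.symm
        _ ≤ _ := (aff_mono hmc hcd).monotone hsp1
    · rw [hsucc]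
      apply (Φ^(nF Φ x)).strictMono
      calc aff (mF Φ x) (cF Φ x) (Φ (mF Φ x)) ((Φ^(-(nF Φ x))) x)
          < aff (mF Φ x) (cF Φ x) (Φ (mF Φ x)) (cF Φ x) := aff_mono hmc hcd hy
        _ = Φ (mF Φ x) := aff_right hmc
        _ < Φ (cF Φ x) := Φ.strictMono hmc
  · push_neg at hy
    rw [sqF_branch2 hx (not_lt.mpr hy)]
    constructor
    · apply (Φ^(nF Φ x)).monotone
      have h1 : mF Φ x ≤ affInv (mF Φ x) (cF Φ x) (Φ (mF Φ x)) ((Φ^(-(nF Φ x))) x) := by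
        calc mF Φ x = affInv (mF Φ x) (cF Φ x) (Φ (mF Φ x)) (cF Φ x) := affInv_left.symm
          _ ≤ _ := (affInv_mono hmc hcd).monotone hy
      calc cF Φ x ≤ Φ (mF Φ x) := le_of_lt hcd
        _ ≤ _ := Φ.monotone h1
    · rw [hsucc]
      apply (Φ^(nF Φ x)).strictMono
      apply Φ.strictMono
      calc affInv (mF Φ x) (cF Φ x) (Φ (mF Φ x)) ((Φ^(-(nF Φ x))) x)
          < affInv (mF Φ x) (cF Φ x) (Φ (mF Φ x)) (Φ (mF Φ x)) := affInv_mono hmc hcd hsp2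
        _ = cF Φ x := affInv_right hcd

lemma sqF_between (hΦ : ∀ x : ℝ, x ≤ Φ x) (hl : ∀ x ≤ l, Φ x = x) (hu : ∀ x, u ≤ x → Φ x = x)
    {x : ℝ} (hx : Φ x ≠ x) :
    x ≤ sqF Φ x ∧ sqF Φ x ≤ Φ x := by
  obtain ⟨hmc, hcd⟩ := cF_mem hΦ hl hu hx
  obtain ⟨hsp1, hsp2⟩ := sqF_spec hΦ hl hu hx
  have hxn : (Φ^(nF Φ x)) ((Φ^(-(nF Φ x))) x) = x := zpow_apply_cancel' Φ _ x
  have hΦxn : (Φ^(nF Φ x)) (Φ ((Φ^(-(nF Φ x))) x)) = Φ x := by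
    rw [zpow_apply_succ, ← zpow_apply_add, show nF Φ x + (-(nF Φ x) + 1) = 1 by ring, zpow_one]
  by_cases hy : (Φ^(-(nF Φ x))) x < cF Φ x
  · rw [sqF_branch1 hx hy]
    constructor
    · conv_lhs => rw [← hxn]
      apply (Φ^(nF Φ x)).monotone
      calc (Φ^(-(nF Φ x))) x ≤ cF Φ x := le_of_lt hy
        _ = aff (mF Φ x) (cF Φ x) (Φ (mF Φ x)) (mF Φ x) := aff_left.symm
        _ ≤ _ := (aff_mono hmc hcd).monotone hsp1
    · conv_rhs => rw [← hΦxn]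
      apply (Φ^(nF Φ x)).monotone
      calc aff (mF Φ x) (cF Φ x) (Φ (mF Φ x)) ((Φ^(-(nF Φ x))) x)
          ≤ aff (mF Φ x) (cF Φ x) (Φ (mF Φ x)) (cF Φ x) := (aff_mono hmc hcd).monotone (le_of_lt hy)
        _ = Φ (mF Φ x) := aff_right hmc
        _ ≤ Φ ((Φ^(-(nF Φ x))) x) := Φ.monotone hsp1
  · push_neg at hy
    rw [sqF_branch2 hx (not_lt.mpr hy)]
    constructor
    · conv_lhs => rw [← hxn]
      apply (Φ^(nF Φ x)).monotone
      refine le_trans (le_of_lt hsp2) (Φ.monotone ?_)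
      calc mF Φ x = affInv (mF Φ x) (cF Φ x) (Φ (mF Φ x)) (cF Φ x) := affInv_left.symm
        _ ≤ _ := (affInv_mono hmc hcd).monotone hy
    · conv_rhs => rw [← hΦxn]
      apply (Φ^(nF Φ x)).monotone
      apply Φ.monotone
      refine le_of_lt ?_
      calc affInv (mF Φ x) (cF Φ x) (Φ (mF Φ x)) ((Φ^(-(nF Φ x))) x)
          < affInv (mF Φ x) (cF Φ x) (Φ (mF Φ x)) (Φ (mF Φ x)) := affInv_mono hmc hcd hsp2
        _ = cF Φ x := affInv_right hcd
        _ ≤ (Φ^(-(nF Φ x))) x := hy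

lemma sqF_mem (hΦ : ∀ x : ℝ, x ≤ Φ x) (hl : ∀ x ≤ l, Φ x = x) (hu : ∀ x, u ≤ x → Φ x = x)
    {x : ℝ} (hx : Φ x ≠ x) :
    aF Φ x < sqF Φ x ∧ sqF Φ x < bF Φ x := by
  obtain ⟨hb1, hb2⟩ := sqF_bounds hΦ hl hu hx
  obtain ⟨hmm1, hmm2⟩ := mF_mem hl hu hx
  obtain ⟨hmc, hcd⟩ := cF_mem hΦ hl hu hx
  have hcmem : aF Φ x < cF Φ x ∧ cF Φ x < bF Φ x := by
    constructor
    · linarith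
    · calc cF Φ x < Φ (mF Φ x) := hcd
        _ < Φ (bF Φ x) := Φ.strictMono hmm2
        _ = bF Φ x := (bF_mem hu hx).1
  constructor
  · exact lt_of_lt_of_le (zpow_mem' hl hu hx (nF Φ x) hcmem.1 hcmem.2).1 hb1
  · exact lt_trans hb2 (zpow_mem' hl hu hx (nF Φ x + 1) hcmem.1 hcmem.2).2

lemma sqF_comp (hΦ : ∀ x : ℝ, x ≤ Φ x) (hl : ∀ x ≤ l, Φ x = x) (hu : ∀ x, u ≤ x → Φ x = x)
    {x : ℝ} (hx : Φ x ≠ x) :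
    Φ (sqF Φ x) ≠ sqF Φ x ∧ mF Φ (sqF Φ x) = mF Φ x ∧ cF Φ (sqF Φ x) = cF Φ x := by
  obtain ⟨h1, h2⟩ := sqF_mem hΦ hl hu hx
  exact ⟨no_fix_between hx _ h1 h2, mF_comp_eq hl hu hx h1 h2⟩

lemma sqF_sqF (hΦ : ∀ x : ℝ, x ≤ Φ x) (hl : ∀ x ≤ l, Φ x = x) (hu : ∀ x, u ≤ x → Φ x = x)
    (x : ℝ) : sqF Φ (sqF Φ x) = Φ x := by
  by_cases hx : Φ x = x
  · rw [sqF_fix Φ hx, sqF_fix Φ hx, hx]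
  · obtain ⟨hmc, hcd⟩ := cF_mem hΦ hl hu hx
    obtain ⟨hsp1, hsp2⟩ := sqF_spec hΦ hl hu hx
    obtain ⟨hvnf, hvm, hvc⟩ := sqF_comp hΦ hl hu hx
    have hΦxn : (Φ^(nF Φ x + 1)) ((Φ^(-(nF Φ x))) x) = Φ x := by
      rw [← zpow_apply_add, show nF Φ x + 1 + (-(nF Φ x)) = 1 by ring, zpow_one]
    by_cases hy : (Φ^(-(nF Φ x))) x < cF Φ x
    · have hv := sqF_branch1 hx hy
      set w := aff (mF Φ x) (cF Φ x) (Φ (mF Φ x)) ((Φ^(-(nF Φ x))) x) with hw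
      have hwc : cF Φ x ≤ w := by
        rw [hw]
        calc cF Φ x = aff (mF Φ x) (cF Φ x) (Φ (mF Φ x)) (mF Φ x) := aff_left.symm
          _ ≤ _ := (aff_mono hmc hcd).monotone hsp1
      have hwd : w < Φ (mF Φ x) := by
        rw [hw]
        calc aff (mF Φ x) (cF Φ x) (Φ (mF Φ x)) ((Φ^(-(nF Φ x))) x)
            < aff (mF Φ x) (cF Φ x) (Φ (mF Φ x)) (cF Φ x) := aff_mono hmc hcd hy
          _ = Φ (mF Φ x) := aff_right hmc
      have hnv : nF Φ (sqF Φ x) = nF Φ x := by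
        apply nF_eq hΦ hl hu (fun hc => hvnf hc)
        · rw [hvm, hv]
          exact (Φ^(nF Φ x)).monotone (le_trans (le_of_lt hmc) hwc)
        · rw [hvm, hv, zpow_apply_add, zpow_one]
          exact (Φ^(nF Φ x)).strictMono hwd
      have hyv : (Φ^(-(nF Φ (sqF Φ x)))) (sqF Φ x) = w := by
        rw [hnv, hv, zpow_apply_cancel]
      rw [sqF_branch2 (fun hc => hvnf hc) (by rw [hyv, hvc]; exact not_lt.mpr hwc)]
      rw [hyv, hnv, hvm, hvc, hw, affInv_aff hmc hcd, zpow_apply_succ,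
        ← zpow_apply_add, show nF Φ x + (-(nF Φ x)+1) = 1 by ring, zpow_one]
    · push_neg at hy
      have hv := sqF_branch2 hx (not_lt.mpr hy)
      set w := affInv (mF Φ x) (cF Φ x) (Φ (mF Φ x)) ((Φ^(-(nF Φ x))) x) with hw
      have hwm : mF Φ x ≤ w := by
        rw [hw]
        calc mF Φ x = affInv (mF Φ x) (cF Φ x) (Φ (mF Φ x)) (cF Φ x) := affInv_left.symm
          _ ≤ _ := (affInv_mono hmc hcd).monotone hy
      have hwc : w < cF Φ x := by
        rw [hw]
        calc affInv (mF Φ x) (cF Φ x) (Φ (mF Φ x)) ((Φ^(-(nF Φ x))) x)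
            < affInv (mF Φ x) (cF Φ x) (Φ (mF Φ x)) (Φ (mF Φ x)) := affInv_mono hmc hcd hsp2
          _ = cF Φ x := affInv_right hcd
      have hv' : sqF Φ x = (Φ^(nF Φ x + 1)) w := by
        rw [hv, show Φ w = (Φ^(1:ℤ)) w by rw [zpow_one], ← zpow_apply_add]
      have hnv : nF Φ (sqF Φ x) = nF Φ x + 1 := by
        apply nF_eq hΦ hl hu (fun hc => hvnf hc)
        · rw [hvm, hv']
          exact (Φ^(nF Φ x + 1)).monotone hwm
        · rw [hvm, hv', zpow_apply_add _ (nF Φ x + 1) 1, zpow_one]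
          exact (Φ^(nF Φ x + 1)).strictMono (lt_trans hwc hcd)
      have hyv : (Φ^(-(nF Φ (sqF Φ x)))) (sqF Φ x) = w := by
        rw [hnv, hv', zpow_apply_cancel]
      rw [sqF_branch1 (fun hc => hvnf hc) (by rw [hyv, hvc]; exact hwc)]
      rw [hyv, hnv, hvm, hvc, hw, aff_affInv hmc hcd, hΦxn]

lemma sqF_strictMono (hΦ : ∀ x : ℝ, x ≤ Φ x) (hl : ∀ x ≤ l, Φ x = x) (hu : ∀ x, u ≤ x → Φ x = x) :
    StrictMono (sqF Φ) := by
  intro x x' hxx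
  by_cases hx : Φ x = x
  · by_cases hx' : Φ x' = x'
    · rw [sqF_fix Φ hx, sqF_fix Φ hx']; exact hxx
    · rw [sqF_fix Φ hx]
      have h1 : x ≤ aF Φ x' := le_csSup ⟨x', fun w hw => hw.2⟩
        (Set.mem_inter hx (show x ∈ Iic x' from le_of_lt hxx))
      exact lt_of_le_of_lt h1 (sqF_mem hΦ hl hu hx').1
  · by_cases hx' : Φ x' = x'
    · rw [sqF_fix Φ hx']
      have h1 : bF Φ x ≤ x' := csInf_le ⟨x, fun w hw => hw.2⟩
        (Set.mem_inter hx' (show x' ∈ Ici x from le_of_lt hxx))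
      exact lt_of_lt_of_le (sqF_mem hΦ hl hu hx).2 h1
    · -- both non fixed
      rcases lt_or_ge x' (bF Φ x) with hsame | hdiff
      · -- same component
        have hax' : aF Φ x < x' := lt_trans (aF_mem hl hx).2 hxx
        have hcx' : mF Φ x' = mF Φ x ∧ cF Φ x' = cF Φ x := mF_comp_eq hl hu hx hax' hsame
        obtain ⟨hm', hc'⟩ := hcx'
        obtain ⟨hmc, hcd⟩ := cF_mem hΦ hl hu hx
        obtain ⟨s1, s2⟩ := nF_spec hΦ hl hu hx
        obtain ⟨s1', s2'⟩ := nF_spec hΦ hl hu hx'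
        rw [hm'] at s1' s2'
        have hmlt := mF_lt hΦ hl hu hx
        have htmono := orbit_mono (Φ := Φ) hmlt
        have hnn' : nF Φ x ≤ nF Φ x' := by
          have h2 : (Φ^(nF Φ x)) (mF Φ x) < (Φ^(nF Φ x' + 1)) (mF Φ x) :=
            lt_of_le_of_lt (le_trans s1 (le_of_lt hxx)) s2'
          have := htmono.lt_iff_lt.mp h2
          omega
        rcases eq_or_lt_of_le hnn' with heq | hlt
        · -- same fundamental domain
          have hyy : (Φ^(-(nF Φ x))) x < (Φ^(-(nF Φ x))) x' := (Φ^(-(nF Φ x))).strictMono hxx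
          by_cases hy : (Φ^(-(nF Φ x))) x < cF Φ x
          · rw [sqF_branch1 hx hy]
            by_cases hy' : (Φ^(-(nF Φ x'))) x' < cF Φ x'
            · rw [sqF_branch1 hx' hy', hm', hc', ← heq]
              exact (Φ^(nF Φ x)).strictMono (aff_mono hmc hcd hyy)
            · rw [sqF_branch2 hx' hy', hm', hc', ← heq]
              apply (Φ^(nF Φ x)).strictMono
              rw [hc', ← heq] at hy'
              push_neg at hy'
              calc aff (mF Φ x) (cF Φ x) (Φ (mF Φ x)) ((Φ^(-(nF Φ x))) x)
                  < aff (mF Φ x) (cF Φ x) (Φ (mF Φ x)) (cF Φ x) := aff_mono hmc hcd hy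
                _ = Φ (mF Φ x) := aff_right hmc
                _ ≤ Φ (affInv (mF Φ x) (cF Φ x) (Φ (mF Φ x)) ((Φ^(-(nF Φ x))) x')) := by
                    apply Φ.monotone
                    calc mF Φ x = affInv (mF Φ x) (cF Φ x) (Φ (mF Φ x)) (cF Φ x) :=
                          affInv_left.symm
                      _ ≤ _ := (affInv_mono hmc hcd).monotone hy'
          · push_neg at hy
            have hy' : ¬ ((Φ^(-(nF Φ x'))) x' < cF Φ x') := by
              rw [hc', ← heq]
              push_neg
              exact le_trans hy (le_of_lt hyy)
            rw [sqF_branch2 hx (not_lt.mpr hy), sqF_branch2 hx' hy', hm', hc', ← heq]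
            apply (Φ^(nF Φ x)).strictMono
            apply Φ.strictMono
            exact affInv_mono hmc hcd hyy
        · -- different fundamental domains
          have hcnf : cF Φ x < Φ (cF Φ x) := by
            refine lt_of_le_of_ne (hΦ _) (Ne.symm (no_fix_between hx _ ?_ ?_))
            · have := (mF_mem hl hu hx).1; linarith
            · calc cF Φ x < Φ (mF Φ x) := hcd
                _ < Φ (bF Φ x) := Φ.strictMono (mF_mem hl hu hx).2
                _ = bF Φ x := (bF_mem hu hx).1
          have hcmono := orbit_mono (Φ := Φ) hcnf
          calc sqF Φ x < (Φ^(nF Φ x + 1)) (cF Φ x) := (sqF_bounds hΦ hl hu hx).2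
            _ ≤ (Φ^(nF Φ x')) (cF Φ x) := hcmono.monotone (by omega)
            _ ≤ sqF Φ x' := by
                have := (sqF_bounds hΦ hl hu hx').1
                rwa [hc'] at this
      · -- different components
        have h1 : bF Φ x ≤ aF Φ x' := le_csSup ⟨x', fun w hw => hw.2⟩
          (Set.mem_inter (bF_mem hu hx).1 (show bF Φ x ∈ Iic x' from hdiff))
        calc sqF Φ x < bF Φ x := (sqF_mem hΦ hl hu hx).2
          _ ≤ aF Φ x' := h1
          _ < sqF Φ x' := (sqF_mem hΦ hl hu hx').1

lemma sqF_surjective (hΦ : ∀ x : ℝ, x ≤ Φ x) (hl : ∀ x ≤ l, Φ x = x) (hu : ∀ x, u ≤ x → Φ x = x) :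
    Function.Surjective (sqF Φ) := by
  intro z
  by_cases hz : Φ z = z
  · exact ⟨z, sqF_fix Φ hz⟩
  · obtain ⟨hmc, hcd⟩ := cF_mem hΦ hl hu hz
    obtain ⟨hsp1, hsp2⟩ := sqF_spec hΦ hl hu hz
    obtain ⟨hmm1, hmm2⟩ := mF_mem hl hu hz
    have hbfix := (bF_mem hu hz).1
    have hdb : Φ (mF Φ z) < bF Φ z := by
      calc Φ (mF Φ z) < Φ (bF Φ z) := Φ.strictMono hmm2
        _ = bF Φ z := hbfix
    by_cases hy : (Φ^(-(nF Φ z))) z < cF Φ z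
    · -- preimage in previous half domain
      set w := aff (mF Φ z) (cF Φ z) (Φ (mF Φ z)) ((Φ^(-(nF Φ z))) z) with hw
      have hwc : cF Φ z ≤ w := by
        rw [hw]
        calc cF Φ z = aff (mF Φ z) (cF Φ z) (Φ (mF Φ z)) (mF Φ z) := aff_left.symm
          _ ≤ _ := (aff_mono hmc hcd).monotone hsp1
      have hwd : w < Φ (mF Φ z) := by
        rw [hw]
        calc aff (mF Φ z) (cF Φ z) (Φ (mF Φ z)) ((Φ^(-(nF Φ z))) z)
            < aff (mF Φ z) (cF Φ z) (Φ (mF Φ z)) (cF Φ z) := aff_mono hmc hcd hy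
          _ = Φ (mF Φ z) := aff_right hmc
      have hwmem : aF Φ z < w ∧ w < bF Φ z :=
        ⟨by linarith, by linarith⟩
      set v := (Φ^(nF Φ z - 1)) w with hvdef
      have hvmem : aF Φ z < v ∧ v < bF Φ z := zpow_mem' hl hu hz _ hwmem.1 hwmem.2
      have hvnf : Φ v ≠ v := no_fix_between hz v hvmem.1 hvmem.2
      obtain ⟨hvm, hvc⟩ := mF_comp_eq hl hu hz hvmem.1 hvmem.2
      have hnv : nF Φ v = nF Φ z - 1 := by
        apply nF_eq hΦ hl hu hvnf
        · rw [hvm, hvdef]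
          exact (Φ^(nF Φ z - 1)).monotone (by linarith)
        · rw [hvm, hvdef, zpow_apply_add _ (nF Φ z - 1) 1, zpow_one]
          exact (Φ^(nF Φ z - 1)).strictMono hwd
      have hyv : (Φ^(-(nF Φ v))) v = w := by
        rw [hnv, hvdef, zpow_apply_cancel]
      refine ⟨v, ?_⟩
      rw [sqF_branch2 hvnf (by rw [hyv, hvc]; exact not_lt.mpr hwc), hyv, hnv, hvm, hvc, hw,
        affInv_aff hmc hcd, zpow_apply_succ, ← zpow_apply_add,
        show nF Φ z - 1 + (-(nF Φ z) + 1) = 0 by ring, zpow_zero]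
      rfl
    · push_neg at hy
      set w := affInv (mF Φ z) (cF Φ z) (Φ (mF Φ z)) ((Φ^(-(nF Φ z))) z) with hw
      have hwm : mF Φ z ≤ w := by
        rw [hw]
        calc mF Φ z = affInv (mF Φ z) (cF Φ z) (Φ (mF Φ z)) (cF Φ z) := affInv_left.symm
          _ ≤ _ := (affInv_mono hmc hcd).monotone hy
      have hwc : w < cF Φ z := by
        rw [hw]
        calc affInv (mF Φ z) (cF Φ z) (Φ (mF Φ z)) ((Φ^(-(nF Φ z))) z)
            < affInv (mF Φ z) (cF Φ z) (Φ (mF Φ z)) (Φ (mF Φ z)) := affInv_mono hmc hcd hsp2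
          _ = cF Φ z := affInv_right hcd
      have hwmem : aF Φ z < w ∧ w < bF Φ z := ⟨by linarith, by linarith⟩
      set v := (Φ^(nF Φ z)) w with hvdef
      have hvmem : aF Φ z < v ∧ v < bF Φ z := zpow_mem' hl hu hz _ hwmem.1 hwmem.2
      have hvnf : Φ v ≠ v := no_fix_between hz v hvmem.1 hvmem.2
      obtain ⟨hvm, hvc⟩ := mF_comp_eq hl hu hz hvmem.1 hvmem.2
      have hnv : nF Φ v = nF Φ z := by
        apply nF_eq hΦ hl hu hvnf
        · rw [hvm, hvdef]
          exact (Φ^(nF Φ z)).monotone hwm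
        · rw [hvm, hvdef, zpow_apply_add _ (nF Φ z) 1, zpow_one]
          exact (Φ^(nF Φ z)).strictMono (lt_trans hwc hcd)
      have hyv : (Φ^(-(nF Φ v))) v = w := by
        rw [hnv, hvdef, zpow_apply_cancel]
      refine ⟨v, ?_⟩
      rw [sqF_branch1 hvnf (by rw [hyv, hvc]; exact hwc), hyv, hnv, hvm, hvc, hw,
        aff_affInv hmc hcd, zpow_apply_cancel']

end hyps2

theorem sqrt_ge (Φ : ℝ ≃o ℝ) (l u : ℝ) (hl : ∀ x ≤ l, Φ x = x) (hu : ∀ x, u ≤ x → Φ x = x)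
    (hΦ : ∀ x : ℝ, x ≤ Φ x) :
    ∃ ψ : ℝ ≃o ℝ, (∀ x, ψ (ψ x) = Φ x) ∧ (∀ x, x ≤ ψ x) ∧ (∀ x, ψ x ≤ Φ x) := by
  refine ⟨StrictMono.orderIsoOfSurjective (sqF Φ) (sqF_strictMono hΦ hl hu)
    (sqF_surjective hΦ hl hu), ?_, ?_, ?_⟩ <;>
    simp only [StrictMono.coe_orderIsoOfSurjective]
  · exact sqF_sqF hΦ hl hu
  · intro x
    by_cases hx : Φ x = x
    · rw [sqF_fix Φ hx]
    · exact (sqF_between hΦ hl hu hx).1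
  · intro x
    by_cases hx : Φ x = x
    · rw [sqF_fix Φ hx, hx]
    · exact (sqF_between hΦ hl hu hx).2

/-- every order iso of `ℝ` with bounded support has a square root between `id` and itself -/
theorem sqrt_any (Φ : ℝ ≃o ℝ) (l u : ℝ) (hl : ∀ x ≤ l, Φ x = x) (hu : ∀ x, u ≤ x → Φ x = x) :
    ∃ ψ : ℝ ≃o ℝ, (∀ x, ψ (ψ x) = Φ x) ∧
      (∀ x, min x (Φ x) ≤ ψ x ∧ ψ x ≤ max x (Φ x)) := by
  -- the increasing and decreasing parts
  have hmaxmono : StrictMono (fun x => max (Φ x) x) := fun a b hab =>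
    max_lt_max (Φ.strictMono hab) hab
  have hmaxsurj : Function.Surjective (fun x => max (Φ x) x) := by
    intro y
    rcases le_total (Φ.symm y) y with hc | hc
    · refine ⟨Φ.symm y, ?_⟩
      simp only
      rw [Φ.apply_symm_apply]
      exact max_eq_left hc
    · refine ⟨y, ?_⟩
      simp only
      have : Φ y ≤ y := by
        have := Φ.monotone hc
        rwa [Φ.apply_symm_apply] at this
      exact max_eq_right this
  have hminmono : StrictMono (fun x => min (Φ x) x) := fun a b hab =>
    min_lt_min (Φ.strictMono hab) hab
  have hminsurj : Function.Surjective (fun x => min (Φ x) x) := by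
    intro y
    rcases le_total y (Φ.symm y) with hc | hc
    · refine ⟨Φ.symm y, ?_⟩
      simp only
      rw [Φ.apply_symm_apply]
      exact min_eq_left hc
    · refine ⟨y, ?_⟩
      simp only
      have : y ≤ Φ y := by
        have := Φ.monotone hc
        rwa [Φ.apply_symm_apply] at this
      exact min_eq_right this
  set P : ℝ ≃o ℝ := StrictMono.orderIsoOfSurjective _ hmaxmono hmaxsurj with hP
  set M : ℝ ≃o ℝ := StrictMono.orderIsoOfSurjective _ hminmono hminsurj with hM
  have hPapp : ∀ x, P x = max (Φ x) x := fun x => by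
    rw [hP, StrictMono.coe_orderIsoOfSurjective]
  have hMapp : ∀ x, M x = min (Φ x) x := fun x => by
    rw [hM, StrictMono.coe_orderIsoOfSurjective]
  have hPge : ∀ x, x ≤ P x := fun x => by rw [hPapp]; exact le_max_right _ _
  have hMle : ∀ x, M x ≤ x := fun x => by rw [hMapp]; exact min_le_right _ _
  -- P ∘ M = Φ
  have hPM : ∀ x, P (M x) = Φ x := by
    intro x
    rcases le_total (Φ x) x with hc | hc
    · rw [hMapp, min_eq_left hc, hPapp]
      apply max_eq_right
      exact Φ.monotone hc
    · rw [hMapp, min_eq_right hc, hPapp]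
      exact max_eq_left hc
  -- support bounds
  have hPl : ∀ x ≤ l, P x = x := fun x hx => by rw [hPapp, hl x hx, max_self]
  have hPu : ∀ x, u ≤ x → P x = x := fun x hx => by rw [hPapp, hu x hx, max_self]
  have hMl : ∀ x ≤ l, M x = x := fun x hx => by rw [hMapp, hl x hx, min_self]
  have hMu : ∀ x, u ≤ x → M x = x := fun x hx => by rw [hMapp, hu x hx, min_self]
  -- square root of P
  obtain ⟨ψP, hψP1, hψP2, hψP3⟩ := sqrt_ge P l u hPl hPu hPge
  -- square root of M via M⁻¹
  have hMinvl : ∀ x ≤ l, M.symm x = x := fun x hx => by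
    rw [M.symm_apply_eq, hMl x hx]
  have hMinvu : ∀ x, u ≤ x → M.symm x = x := fun x hx => by
    rw [M.symm_apply_eq, hMu x hx]
  have hMinvge : ∀ x, x ≤ M.symm x := fun x => by
    rw [M.le_symm_apply]; exact hMle x
  obtain ⟨ρ, hρ1, hρ2, hρ3⟩ := sqrt_ge M.symm l u hMinvl hMinvu hMinvge
  set ψM : ℝ ≃o ℝ := ρ.symm with hψM
  have hψM1 : ∀ x, ψM (ψM x) = M x := by
    intro x
    rw [hψM]
    have h1 : ρ (ρ (M x)) = M.symm (M x) := hρ1 (M x)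
    rw [M.symm_apply_apply] at h1
    have h2 : ρ.symm x = ρ (M x) := by rw [ρ.symm_apply_eq, h1]
    rw [h2, ρ.symm_apply_apply]
  have hψM2 : ∀ x, M x ≤ ψM x := by
    intro x
    rw [hψM, ρ.le_symm_apply]
    calc ρ (M x) ≤ M.symm (M x) := hρ3 (M x)
      _ = x := M.symm_apply_apply x
  have hψM3 : ∀ x, ψM x ≤ x := by
    intro x
    rw [hψM, ρ.symm_apply_le]
    exact hρ2 x
  -- pinch properties
  have hψPfix : ∀ x, P x = x → ψP x = x := fun x hx =>
    le_antisymm ((hψP3 x).trans (le_of_eq hx)) (hψP2 x)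
  have hψMfix : ∀ x, M x = x → ψM x = x := fun x hx =>
    le_antisymm (hψM3 x) ((le_of_eq hx.symm).trans (hψM2 x))
  -- nonfixed points are preserved
  have hψPnf : ∀ x, P x ≠ x → P (ψP x) ≠ ψP x := by
    intro x hx hfix
    have h1 : ψP (ψP x) = ψP x := hψPfix _ hfix
    rw [hψP1] at h1
    have h2 : ψP x = ψP (ψP x) := by rw [hψP1, h1]
    have h3 : x = ψP x := ψP.injective h2
    exact hx (h1.trans h3.symm)
  have hψMnf : ∀ x, M x ≠ x → M (ψM x) ≠ ψM x := by
    intro x hx hfix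
    have h1 : ψM (ψM x) = ψM x := hψMfix _ hfix
    rw [hψM1] at h1
    have h2 : ψM x = ψM (ψM x) := by rw [hψM1, h1]
    have h3 : x = ψM x := ψM.injective h2
    exact hx (h1.trans h3.symm)
  refine ⟨ψM.trans ψP, ?_, ?_⟩
  · intro x
    simp only [OrderIso.trans_apply]
    rcases lt_trichotomy (Φ x) x with ht | ht | ht
    · -- decreasing at x
      have hMx : M x = Φ x := by rw [hMapp]; exact min_eq_left (le_of_lt ht)
      have hPx : P x = x := by rw [hPapp]; exact max_eq_right (le_of_lt ht)
      have hMnfx : M x ≠ x := by rw [hMx]; exact ne_of_lt ht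
      have h4 : M (ψM x) ≠ ψM x := hψMnf x hMnfx
      have h5 : Φ (ψM x) < ψM x := by
        rcases lt_trichotomy (Φ (ψM x)) (ψM x) with hc | hc | hc
        · exact hc
        · exact absurd (show M (ψM x) = ψM x by rw [hMapp, hc, min_self]) h4
        · exact absurd (show M (ψM x) = ψM x by
            rw [hMapp]; exact min_eq_right (le_of_lt hc)) h4
      have h6 : P (ψM x) = ψM x := by rw [hPapp]; exact max_eq_right (le_of_lt h5)
      rw [hψPfix _ h6]
      have h7 : P (ψM (ψM x)) = ψM (ψM x) := by
        rw [hψM1, hMx]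
        have := hPM x
        rwa [hMx] at this
      rw [hψPfix _ h7, hψM1, hMx]
    · -- fixed at x
      have hMx : M x = x := by rw [hMapp, ht, min_self]
      have hPx : P x = x := by rw [hPapp, ht, max_self]
      rw [hψMfix _ hMx, hψPfix _ hPx, hψMfix _ hMx, hψPfix _ hPx, ht]
    · -- increasing at x
      have hMx : M x = x := by rw [hMapp]; exact min_eq_right (le_of_lt ht)
      have hPx : P x = Φ x := by rw [hPapp]; exact max_eq_left (le_of_lt ht)
      rw [hψMfix _ hMx]
      have hPnfx : P x ≠ x := by rw [hPx]; exact ne_of_gt ht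
      have h4 : P (ψP x) ≠ ψP x := hψPnf x hPnfx
      have h5 : ψP x < Φ (ψP x) := by
        rcases lt_trichotomy (Φ (ψP x)) (ψP x) with hc | hc | hc
        · exact absurd (show P (ψP x) = ψP x by
            rw [hPapp]; exact max_eq_right (le_of_lt hc)) h4
        · exact absurd (show P (ψP x) = ψP x by rw [hPapp, hc, max_self]) h4
        · exact hc
      have h6 : M (ψP x) = ψP x := by rw [hMapp]; exact min_eq_right (le_of_lt h5)
      rw [hψMfix _ h6, hψP1, hPx]
  · intro x
    simp only [OrderIso.trans_apply]
    rcases lt_trichotomy (Φ x) x with ht | ht | ht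
    · have hMx : M x = Φ x := by rw [hMapp]; exact min_eq_left (le_of_lt ht)
      have hMnfx : M x ≠ x := by rw [hMx]; exact ne_of_lt ht
      have h4 : M (ψM x) ≠ ψM x := hψMnf x hMnfx
      have h5 : Φ (ψM x) < ψM x := by
        rcases lt_trichotomy (Φ (ψM x)) (ψM x) with hc | hc | hc
        · exact hc
        · exact absurd (show M (ψM x) = ψM x by rw [hMapp, hc, min_self]) h4
        · exact absurd (show M (ψM x) = ψM x by
            rw [hMapp]; exact min_eq_right (le_of_lt hc)) h4
      have h6 : P (ψM x) = ψM x := by rw [hPapp]; exact max_eq_right (le_of_lt h5)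
      rw [hψPfix _ h6]
      constructor
      · rw [min_eq_right (le_of_lt ht), ← hMx]; exact hψM2 x
      · rw [max_eq_left (le_of_lt ht)]; exact hψM3 x
    · have hMx : M x = x := by rw [hMapp, ht, min_self]
      have hPx : P x = x := by rw [hPapp, ht, max_self]
      rw [hψMfix _ hMx, hψPfix _ hPx, ht, min_self, max_self]
      exact ⟨le_rfl, le_rfl⟩
    · have hMx : M x = x := by rw [hMapp]; exact min_eq_right (le_of_lt ht)
      have hPx : P x = Φ x := by rw [hPapp]; exact max_eq_left (le_of_lt ht)
      rw [hψMfix _ hMx]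
      constructor
      · rw [min_eq_left (le_of_lt ht)]
        exact hψP2 x
      · rw [max_eq_right (le_of_lt ht), ← hPx]
        exact hψP3 x

end PSsqrt


noncomputable section PStrunc

lemma truncate (Ψ : ℝ ≃o ℝ) (p : ℝ) (hp : Ψ p = p) :
    ∃ Ψ' : ℝ ≃o ℝ, (∀ x ≤ p, Ψ' x = x) ∧ (∀ x, p ≤ x → x ≤ p + 1 → Ψ' x = Ψ x) ∧
      (∃ u, ∀ x, u ≤ x → Ψ' x = x) := by
  set c : ℝ := p + 1 with hc
  set C : ℝ := max c (Ψ c) + 1 with hC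
  have hcC : c < C := lt_of_le_of_lt (le_max_left _ _) (by rw [hC]; linarith)
  have hΨcC : Ψ c < C := lt_of_le_of_lt (le_max_right _ _) (by rw [hC]; linarith)
  have hpc : p < c := by rw [hc]; linarith
  have hk : (0:ℝ) < (C - Ψ c) / (C - c) := div_pos (by linarith) (by linarith)
  set lin : ℝ → ℝ := fun x => Ψ c + (x - c) * ((C - Ψ c) / (C - c)) with hlin
  have hlinc : lin c = Ψ c := by simp [hlin]
  have hlinC : lin C = C := by
    have h2 : C - c ≠ 0 := by linarith
    simp only [hlin]
    field_simp
    ring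
  have hlinmono : StrictMono lin := by
    intro a b hab
    simp only [hlin]
    have : (a - c) * ((C - Ψ c) / (C - c)) < (b - c) * ((C - Ψ c) / (C - c)) := by
      apply mul_lt_mul_of_pos_right _ hk; linarith
    linarith
  have hΨp : ∀ x, p < x → p < Ψ x := by
    intro x hx; rw [← hp]; exact Ψ.strictMono hx
  -- the truncated map
  set f : ℝ → ℝ := fun x => if x ≤ p then x else if x ≤ c then Ψ x else if x ≤ C then lin x else x
    with hf
  have hf1 : ∀ x ≤ p, f x = x := fun x hx => if_pos hx
  have hf2 : ∀ x, p < x → x ≤ c → f x = Ψ x := by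
    intro x h1 h2; simp only [hf]; rw [if_neg (not_le.mpr h1), if_pos h2]
  have hf3 : ∀ x, c < x → x ≤ C → f x = lin x := by
    intro x h1 h2; simp only [hf]
    rw [if_neg (not_le.mpr (lt_trans hpc h1)), if_neg (not_le.mpr h1), if_pos h2]
  have hf4 : ∀ x, C < x → f x = x := by
    intro x h1; simp only [hf]
    rw [if_neg (not_le.mpr (lt_trans (lt_trans hpc hcC) h1)),
      if_neg (not_le.mpr (lt_trans hcC h1)), if_neg (not_le.mpr h1)]
  -- value ranges on each piece
  have hr2 : ∀ x, p < x → x ≤ c → p < f x ∧ f x ≤ Ψ c := by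
    intro x h1 h2; rw [hf2 x h1 h2]
    exact ⟨hΨp x h1, Ψ.monotone h2⟩
  have hr3 : ∀ x, c < x → x ≤ C → Ψ c < f x ∧ f x ≤ C := by
    intro x h1 h2; rw [hf3 x h1 h2]
    constructor
    · rw [← hlinc]; exact hlinmono h1
    · rw [← hlinC]; exact hlinmono.monotone h2
  have hΨcp : p < Ψ c := hΨp c hpc
  have hmono : StrictMono f := by
    intro a b hab
    rcases le_or_gt a p with ha1 | ha1
    · rw [hf1 a ha1]
      rcases le_or_gt b p with hb1 | hb1
      · rw [hf1 b hb1]; exact hab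
      · rcases le_or_gt b c with hb2 | hb2
        · exact lt_of_le_of_lt ha1 (hr2 b hb1 hb2).1
        · rcases le_or_gt b C with hb3 | hb3
          · exact lt_trans (lt_of_le_of_lt ha1 hΨcp) (hr3 b hb2 hb3).1
          · rw [hf4 b hb3]; exact hab
    · rcases le_or_gt a c with ha2 | ha2
      · have hva := hr2 a ha1 ha2
        rcases le_or_gt b c with hb2 | hb2
        · rw [hf2 a ha1 ha2, hf2 b (lt_trans ha1 hab) hb2]
          exact Ψ.strictMono hab
        · rcases le_or_gt b C with hb3 | hb3
          · exact lt_of_le_of_lt hva.2 (hr3 b hb2 hb3).1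
          · rw [hf4 b hb3]
            exact lt_of_le_of_lt hva.2 (lt_trans hΨcC hb3)
      · rcases le_or_gt a C with ha3 | ha3
        · have hva := hr3 a ha2 ha3
          rcases le_or_gt b C with hb3 | hb3
          · rw [hf3 a ha2 ha3, hf3 b (lt_trans ha2 hab) hb3]
            exact hlinmono hab
          · rw [hf4 b hb3]
            exact lt_of_le_of_lt hva.2 hb3
        · rw [hf4 a ha3, hf4 b (lt_trans ha3 hab)]
          exact hab
  have hsurj : Function.Surjective f := by
    intro y
    rcases le_or_gt y p with h1 | h1
    · exact ⟨y, hf1 y h1⟩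
    · rcases le_or_gt y (Ψ c) with h2 | h2
      · refine ⟨Ψ.symm y, ?_⟩
        have hs1 : p < Ψ.symm y := by
          have : Ψ.symm (Ψ p) < Ψ.symm y := Ψ.symm.strictMono (by rwa [hp])
          rwa [Ψ.symm_apply_apply] at this
        have hs2 : Ψ.symm y ≤ c := by
          have := Ψ.symm.monotone h2
          rwa [Ψ.symm_apply_apply] at this
        rw [hf2 _ hs1 hs2, Ψ.apply_symm_apply]
      · rcases le_or_gt y C with h3 | h3
        · -- invert lin
          set x := c + (y - Ψ c) * ((C - c) / (C - Ψ c)) with hx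
          have hk2 : (0:ℝ) < (C - c) / (C - Ψ c) := div_pos (by linarith) (by linarith)
          have hx1 : c < x := by
            rw [hx]; nlinarith
          have hlx : lin x = y := by
            simp only [hlin, hx]
            have h4 : C - c ≠ 0 := by linarith
            have h5 : C - Ψ c ≠ 0 := by linarith
            field_simp
            ring
          have hx2 : x ≤ C := by
            by_contra hcon
            push_neg at hcon
            have := hlinmono hcon
            rw [hlinC, hlx] at this; linarith
          exact ⟨x, by rw [hf3 x hx1 hx2, hlx]⟩
        · exact ⟨y, hf4 y h3⟩
  refine ⟨StrictMono.orderIsoOfSurjective f hmono hsurj, ?_, ?_, ⟨C, ?_⟩⟩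
  · intro x hx
    rw [StrictMono.coe_orderIsoOfSurjective]; exact hf1 x hx
  · intro x hx1 hx2
    rw [StrictMono.coe_orderIsoOfSurjective]
    rcases eq_or_lt_of_le hx1 with he | hlt
    · rw [← he, hf1 p le_rfl, hp]
    · exact hf2 x hlt (by rw [hc]; linarith)
  · intro x hx
    rw [StrictMono.coe_orderIsoOfSurjective]
    rcases eq_or_lt_of_le hx with he | hlt
    · rw [← he, hf3 C hcC le_rfl, hlinC]
    · exact hf4 x hlt

end PStrunc


noncomputable section PSEaux

/-- The extension of `h` beyond `p` by `W⁻¹ ∘ ψ`. -/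
def extFun (p : ℝ) (h : ℝ → ℝ) (W ψ : ℝ ≃o ℝ) : ℝ → ℝ :=
  fun x => if x ≤ p then h x else W.symm (ψ x)

lemma extFun_of_le (p : ℝ) (h : ℝ → ℝ) (W ψ : ℝ ≃o ℝ) {x : ℝ} (hx : x ≤ p) :
    extFun p h W ψ x = h x := if_pos hx

lemma extFun_of_gt (p : ℝ) (h : ℝ → ℝ) (W ψ : ℝ ≃o ℝ) {x : ℝ} (hx : p < x) :
    extFun p h W ψ x = W.symm (ψ x) := if_neg (not_le.mpr hx)

lemma build_mono (p : ℝ) (h : ℝ → ℝ) (E W ψ : ℝ ≃o ℝ)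
    (hE : ∀ x ≤ p, E x = h x) (hW : W (E p) = p) (hψ : ψ p = p) (ε : ℝ) :
    StrictMonoOn (extFun p h W ψ) (Iic (p + ε)) := by
  have hq : W.symm p = E p := W.symm_apply_eq.mpr hW.symm
  intro x hx y hy hxy
  rcases le_or_gt x p with h1 | h1
  · rcases le_or_gt y p with h2 | h2
    · rw [extFun_of_le p h W ψ h1, extFun_of_le p h W ψ h2, ← hE x h1, ← hE y h2]
      exact E.strictMono hxy
    · rw [extFun_of_le p h W ψ h1, extFun_of_gt p h W ψ h2, ← hE x h1]
      have : E x ≤ E p := E.monotone h1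
      have h3 : ψ p < ψ y := ψ.strictMono h2
      have : W.symm (ψ p) < W.symm (ψ y) := W.symm.strictMono h3
      rw [hψ, hq] at this
      exact lt_of_le_of_lt ‹E x ≤ E p› this
  · have h2 : p < y := lt_trans h1 hxy
    rw [extFun_of_gt p h W ψ h1, extFun_of_gt p h W ψ h2]
    exact W.symm.strictMono (ψ.strictMono hxy)

lemma build_lower (p : ℝ) (h : ℝ → ℝ) (E W ψ : ℝ ≃o ℝ)
    (hE : ∀ x ≤ p, E x = h x) (hW : W (E p) = p) (hψ : ψ p = p) (ε : ℝ) (hε : 0 < ε) :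
    IsLowerSet (extFun p h W ψ '' Iic (p + ε)) := by
  have hq : W.symm p = E p := W.symm_apply_eq.mpr hW.symm
  have hmono := build_mono p h E W ψ hE hW hψ ε
  intro b a hab hb
  obtain ⟨x₀, hx₀, hbx⟩ := hb
  have hple : p + ε ∈ Iic (p + ε) := self_mem_Iic
  have hb_le : b ≤ extFun p h W ψ (p + ε) := by
    rw [← hbx]
    rcases eq_or_lt_of_le (show x₀ ≤ p + ε from hx₀) with he | hlt
    · rw [he]
    · exact le_of_lt (hmono hx₀ hple hlt)
  have ha_le : a ≤ extFun p h W ψ (p + ε) := le_trans hab hb_le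
  rcases le_or_gt a (E p) with h1 | h1
  · refine ⟨E.symm a, ?_, ?_⟩
    · have : E.symm a ≤ E.symm (E p) := E.symm.monotone h1
      rw [E.symm_apply_apply] at this
      exact le_trans this (by linarith)
    · have h2 : E.symm a ≤ p := by
        have : E.symm a ≤ E.symm (E p) := E.symm.monotone h1
        rwa [E.symm_apply_apply] at this
      rw [extFun_of_le p h W ψ h2, ← hE _ h2, E.apply_symm_apply]
  · refine ⟨ψ.symm (W a), ?_, ?_⟩
    · have hpe : p < p + ε := by linarith
      rw [extFun_of_gt p h W ψ hpe] at ha_le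
      have : W a ≤ ψ (p + ε) := by
        have := W.monotone ha_le
        rwa [W.apply_symm_apply] at this
      have := ψ.symm.monotone this
      rwa [ψ.symm_apply_apply] at this
    · have hgt : p < ψ.symm (W a) := by
        have h2 : W (E p) < W a := W.strictMono h1
        rw [hW] at h2
        have := ψ.symm.strictMono h2
        rwa [← hψ, ψ.symm_apply_apply] at this
      rw [extFun_of_gt p h W ψ hgt, ψ.apply_symm_apply, W.symm_apply_apply]

lemma build_main (g₁ g₂ g₃ : ℝ ≃o ℝ) (p : ℝ) (h : ℝ → ℝ) (E W ψ : ℝ ≃o ℝ)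
    (hE : ∀ x ≤ p, E x = h x) (hW : W (E p) = p) (hψ : ψ p = p) (ε : ℝ) (hε : 0 < ε)
    (heq : ∀ x : ℝ, g₃ x ≤ p + ε → g₂ (extFun p h W ψ (g₃ x)) ≤ p + ε →
        g₁ (extFun p h W ψ (g₂ (extFun p h W ψ (g₃ x)))) ≤ p + ε →
        extFun p h W ψ (g₁ (extFun p h W ψ (g₂ (extFun p h W ψ (g₃ x))))) = x) :
    (StrictMonoOn (extFun p h W ψ) (Iic (p+ε)) ∧ IsLowerSet (extFun p h W ψ '' Iic (p+ε)) ∧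
      ∀ x : ℝ, g₃ x ≤ p + ε → g₂ (extFun p h W ψ (g₃ x)) ≤ p + ε →
        g₁ (extFun p h W ψ (g₂ (extFun p h W ψ (g₃ x)))) ≤ p + ε →
        extFun p h W ψ (g₁ (extFun p h W ψ (g₂ (extFun p h W ψ (g₃ x))))) = x) ∧
    ∀ x ≤ p, extFun p h W ψ x = h x :=
  ⟨⟨build_mono p h E W ψ hE hW hψ ε, build_lower p h E W ψ hE hW hψ ε hε, heq⟩,
    fun x hx => extFun_of_le p h W ψ hx⟩

end PSEaux


noncomputable section PSmain

/-- old part of the equation -/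
lemma old_case (g₁ g₂ g₃ E W ψ : ℝ ≃o ℝ) (p eh : ℝ) (h : ℝ → ℝ)
    (hE : ∀ x ≤ p, E x = h x)
    (domIff : ∀ x : ℝ, (g₃ x ≤ p ∧ g₂ (E (g₃ x)) ≤ p ∧ g₁ (E (g₂ (E (g₃ x)))) ≤ p) ↔ x ≤ eh)
    (geq : ∀ x : ℝ, g₃ x ≤ p → g₂ (E (g₃ x)) ≤ p → g₁ (E (g₂ (E (g₃ x)))) ≤ p →
        E (g₁ (E (g₂ (E (g₃ x))))) = x) :
    ∀ x ≤ eh, extFun p h W ψ (g₁ (extFun p h W ψ (g₂ (extFun p h W ψ (g₃ x))))) = x := by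
  intro x hx
  obtain ⟨c1, c2, c3⟩ := (domIff x).mpr hx
  rw [extFun_of_le _ _ _ _ c1, ← hE _ c1, extFun_of_le _ _ _ _ c2, ← hE _ c2,
    extFun_of_le _ _ _ _ c3, ← hE _ c3]
  exact geq x c1 c2 c3

section cases
variable (g₁ g₂ g₃ E : ℝ ≃o ℝ) (p eh : ℝ) (h : ℝ → ℝ)

/-- Case `a₃ = p`, `a₂ < p`, `a₁ < p`. -/
lemma case3
    (hE : ∀ x ≤ p, E x = h x)
    (domIff : ∀ x : ℝ, (g₃ x ≤ p ∧ g₂ (E (g₃ x)) ≤ p ∧ g₁ (E (g₂ (E (g₃ x)))) ≤ p) ↔ x ≤ eh)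
    (geq : ∀ x : ℝ, g₃ x ≤ p → g₂ (E (g₃ x)) ≤ p → g₁ (E (g₂ (E (g₃ x)))) ≤ p →
        E (g₁ (E (g₂ (E (g₃ x))))) = x)
    (e3 : g₃ eh = p) (l2 : g₂ (E (g₃ eh)) < p) (l1 : g₁ (E (g₂ (E (g₃ eh)))) < p) :
    ∃ ε : ℝ, 0 < ε ∧ ∃ W ψ : ℝ ≃o ℝ, W (E p) = p ∧ ψ p = p ∧
      ∀ x : ℝ, g₃ x ≤ p + ε → g₂ (extFun p h W ψ (g₃ x)) ≤ p + ε →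
        g₁ (extFun p h W ψ (g₂ (extFun p h W ψ (g₃ x)))) ≤ p + ε →
        extFun p h W ψ (g₁ (extFun p h W ψ (g₂ (extFun p h W ψ (g₃ x))))) = x := by
  obtain ⟨d1, d2, d3⟩ := (domIff eh).mpr le_rfl
  have hB1 : E (g₁ (E (g₂ (E (g₃ eh))))) = eh := geq eh d1 d2 d3
  set W : ℝ ≃o ℝ := g₂.trans (E.trans (g₁.trans (E.trans g₃))) with hWdef
  have hWapp : ∀ z, W z = g₃ (E (g₁ (E (g₂ z)))) := fun z => rfl
  have hehq : eh < E p := by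
    calc eh = E (g₁ (E (g₂ (E (g₃ eh))))) := hB1.symm
      _ < E p := E.strictMono l1
  have hg1q : g₁ (E (g₂ (E (g₃ eh)))) < g₁ (E p) := by
    apply g₁.strictMono; apply E.strictMono; exact l2
  have hM1 : eh < E (g₁ (E p)) := by
    calc eh = E (g₁ (E (g₂ (E (g₃ eh))))) := hB1.symm
      _ < E (g₁ (E p)) := E.strictMono hg1q
  set K : ℝ := min (E (g₁ (E p))) (E p) with hK
  have hKgt : eh < K := lt_min hM1 hehq
  have hεpos : 0 < g₃ K - p := by
    have : g₃ eh < g₃ K := g₃.strictMono hKgt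
    rw [e3] at this; linarith
  refine ⟨g₃ K - p, hεpos, W, OrderIso.refl ℝ, ?_, rfl, ?_⟩
  · -- W (E p) = p
    have h1 := congrArg g₃ hB1
    rw [e3] at h1
    rw [hWapp]
    exact h1
  · intro x c1 c2 c3
    rcases le_or_gt x eh with hxe | hxe
    · exact old_case g₁ g₂ g₃ E W (OrderIso.refl ℝ) p eh h hE domIff geq x hxe
    · -- new regime
      have hg3 : p < g₃ x := by
        by_contra hcon; push_neg at hcon
        rw [← e3] at hcon
        exact absurd (g₃.le_iff_le.mp hcon) (not_le.mpr hxe)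
      have hxK : x ≤ K := by
        have : g₃ x ≤ g₃ K := by
          calc g₃ x ≤ p + (g₃ K - p) := c1
            _ = g₃ K := by ring
        exact g₃.le_iff_le.mp this
      have hxq : x ≤ E p := le_trans hxK (min_le_right _ _)
      have hxM1 : x ≤ E (g₁ (E p)) := le_trans hxK (min_le_left _ _)
      rw [extFun_of_gt _ _ _ _ hg3]
      simp only [OrderIso.refl_apply]
      -- the value of W.symm (g₃ x)
      set v := W.symm (g₃ x) with hv
      have hWv : g₃ (E (g₁ (E (g₂ v)))) = g₃ x := by rw [← hWapp, hv, W.apply_symm_apply]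
      have hEgv : E (g₁ (E (g₂ v))) = x := g₃.injective hWv
      have hgv : g₁ (E (g₂ v)) = E.symm x := by rw [← hEgv, E.symm_apply_apply]
      have hEz : E (g₂ v) = g₁.symm (E.symm x) := by rw [← hgv, g₁.symm_apply_apply]
      have hz_le : g₂ v ≤ p := by
        rw [← E.le_iff_le, hEz]
        rw [g₁.symm_apply_le]
        rw [E.symm_apply_le]
        exact hxM1
      rw [extFun_of_le _ _ _ _ hz_le, ← hE _ hz_le, hEz, g₁.apply_symm_apply]
      have hw_le : E.symm x ≤ p := by
        rw [E.symm_apply_le]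
        exact hxq
      rw [extFun_of_le _ _ _ _ hw_le, ← hE _ hw_le, E.apply_symm_apply]

/-- Case `a₂ = p`, `a₃ < p`, `a₁ < p`. -/
lemma case2
    (hE : ∀ x ≤ p, E x = h x)
    (domIff : ∀ x : ℝ, (g₃ x ≤ p ∧ g₂ (E (g₃ x)) ≤ p ∧ g₁ (E (g₂ (E (g₃ x)))) ≤ p) ↔ x ≤ eh)
    (geq : ∀ x : ℝ, g₃ x ≤ p → g₂ (E (g₃ x)) ≤ p → g₁ (E (g₂ (E (g₃ x)))) ≤ p →
        E (g₁ (E (g₂ (E (g₃ x))))) = x)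
    (l3 : g₃ eh < p) (e2 : g₂ (E (g₃ eh)) = p) (l1 : g₁ (E (g₂ (E (g₃ eh)))) < p) :
    ∃ ε : ℝ, 0 < ε ∧ ∃ W ψ : ℝ ≃o ℝ, W (E p) = p ∧ ψ p = p ∧
      ∀ x : ℝ, g₃ x ≤ p + ε → g₂ (extFun p h W ψ (g₃ x)) ≤ p + ε →
        g₁ (extFun p h W ψ (g₂ (extFun p h W ψ (g₃ x)))) ≤ p + ε →
        extFun p h W ψ (g₁ (extFun p h W ψ (g₂ (extFun p h W ψ (g₃ x))))) = x := by
  obtain ⟨d1, d2, d3⟩ := (domIff eh).mpr le_rfl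
  have hB1 : E (g₁ (E (g₂ (E (g₃ eh))))) = eh := geq eh d1 d2 d3
  set W : ℝ ≃o ℝ := g₁.trans (E.trans (g₃.trans (E.trans g₂))) with hWdef
  have hWapp : ∀ z, W z = g₂ (E (g₃ (E (g₁ z)))) := fun z => rfl
  have hB1' : E (g₁ (E p)) = eh := by rw [e2] at hB1; exact hB1
  have hW : W (E p) = p := by
    rw [hWapp, hB1', e2]
  have hehq : eh < E p := by
    calc eh = E (g₁ (E (g₂ (E (g₃ eh))))) := hB1.symm
      _ < E p := E.strictMono l1
  have m1 : p < g₂ (E p) := by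
    calc p = g₂ (E (g₃ eh)) := e2.symm
      _ < g₂ (E p) := g₂.strictMono (E.strictMono l3)
  have m2 : p < g₂ (E (g₃ (E p))) := by
    calc p = g₂ (E (g₃ eh)) := e2.symm
      _ < g₂ (E (g₃ (E p))) := g₂.strictMono (E.strictMono (g₃.strictMono hehq))
  set ε : ℝ := min (g₂ (E p) - p) (g₂ (E (g₃ (E p))) - p) with hεdef
  have hεpos : 0 < ε := lt_min (by linarith) (by linarith)
  refine ⟨ε, hεpos, W, OrderIso.refl ℝ, hW, rfl, ?_⟩
  intro x c1 c2 c3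
  rcases le_or_gt x eh with hxe | hxe
  · exact old_case g₁ g₂ g₃ E W (OrderIso.refl ℝ) p eh h hE domIff geq x hxe
  · have hWsymm_gt : ∀ t, p < t → E p < W.symm t := by
      intro t ht
      have : W.symm p < W.symm t := W.symm.strictMono ht
      rwa [show W.symm p = E p from W.symm_apply_eq.mpr hW.symm] at this
    have hg3 : g₃ x ≤ p := by
      by_contra hcon; push_neg at hcon
      rw [extFun_of_gt _ _ _ _ hcon] at c2
      simp only [OrderIso.refl_apply] at c2
      have h2 : g₂ (E p) < g₂ (W.symm (g₃ x)) := g₂.strictMono (hWsymm_gt _ hcon)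
      have h3 : p + ε ≤ g₂ (E p) := by
        have := min_le_left (g₂ (E p) - p) (g₂ (E (g₃ (E p))) - p)
        rw [← hεdef] at this; linarith
      linarith
    rw [extFun_of_le _ _ _ _ hg3, ← hE _ hg3] at c2 c3 ⊢
    have hz_gt : p < g₂ (E (g₃ x)) := by
      by_contra hcon; push_neg at hcon
      have h4 : g₁ (E (g₂ (E (g₃ x)))) ≤ p := by
        calc g₁ (E (g₂ (E (g₃ x)))) ≤ g₁ (E p) := g₁.monotone (E.monotone hcon)
          _ = g₁ (E (g₂ (E (g₃ eh)))) := by rw [e2]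
          _ ≤ p := le_of_lt l1
      exact absurd ((domIff x).mp ⟨hg3, hcon, h4⟩) (not_le.mpr hxe)
    have hxq : x ≤ E p := by
      by_contra hcon; push_neg at hcon
      have h5 : g₂ (E (g₃ (E p))) < g₂ (E (g₃ x)) :=
        g₂.strictMono (E.strictMono (g₃.strictMono hcon))
      have h6 : p + ε ≤ g₂ (E (g₃ (E p))) := by
        have := min_le_right (g₂ (E p) - p) (g₂ (E (g₃ (E p))) - p)
        rw [← hεdef] at this; linarith
      linarith
    rw [extFun_of_gt _ _ _ _ hz_gt]
    simp only [OrderIso.refl_apply]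
    set v := W.symm (g₂ (E (g₃ x))) with hv
    have hWv : g₂ (E (g₃ (E (g₁ v)))) = g₂ (E (g₃ x)) := by
      rw [← hWapp, hv, W.apply_symm_apply]
    have h7 : E (g₁ v) = x := g₃.injective (E.injective (g₂.injective hWv))
    have h8 : g₁ v = E.symm x := by rw [← h7, E.symm_apply_apply]
    rw [h8]
    have hw_le : E.symm x ≤ p := by rw [E.symm_apply_le]; exact hxq
    rw [extFun_of_le _ _ _ _ hw_le, ← hE _ hw_le, E.apply_symm_apply]

/-- Case `a₁ = p`, `a₃ < p`, `a₂ < p`. -/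
lemma case1
    (hE : ∀ x ≤ p, E x = h x)
    (domIff : ∀ x : ℝ, (g₃ x ≤ p ∧ g₂ (E (g₃ x)) ≤ p ∧ g₁ (E (g₂ (E (g₃ x)))) ≤ p) ↔ x ≤ eh)
    (geq : ∀ x : ℝ, g₃ x ≤ p → g₂ (E (g₃ x)) ≤ p → g₁ (E (g₂ (E (g₃ x)))) ≤ p →
        E (g₁ (E (g₂ (E (g₃ x))))) = x)
    (l3 : g₃ eh < p) (l2 : g₂ (E (g₃ eh)) < p) (e1 : g₁ (E (g₂ (E (g₃ eh)))) = p) :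
    ∃ ε : ℝ, 0 < ε ∧ ∃ W ψ : ℝ ≃o ℝ, W (E p) = p ∧ ψ p = p ∧
      ∀ x : ℝ, g₃ x ≤ p + ε → g₂ (extFun p h W ψ (g₃ x)) ≤ p + ε →
        g₁ (extFun p h W ψ (g₂ (extFun p h W ψ (g₃ x)))) ≤ p + ε →
        extFun p h W ψ (g₁ (extFun p h W ψ (g₂ (extFun p h W ψ (g₃ x))))) = x := by
  obtain ⟨d1, d2, d3⟩ := (domIff eh).mpr le_rfl
  have hB1 : E (g₁ (E (g₂ (E (g₃ eh))))) = eh := geq eh d1 d2 d3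
  have hEpeh : E p = eh := by rw [e1] at hB1; exact hB1
  set W : ℝ ≃o ℝ := g₃.trans (E.trans (g₂.trans (E.trans g₁))) with hWdef
  have hWapp : ∀ z, W z = g₁ (E (g₂ (E (g₃ z)))) := fun z => rfl
  have hW : W (E p) = p := by rw [hWapp, hEpeh, e1]
  have m1 : p < g₁ (E p) := by
    calc p = g₁ (E (g₂ (E (g₃ eh)))) := e1.symm
      _ < g₁ (E p) := g₁.strictMono (E.strictMono l2)
  have m2 : p < g₁ (E (g₂ (E p))) := by
    calc p = g₁ (E (g₂ (E (g₃ eh)))) := e1.symm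
      _ < g₁ (E (g₂ (E p))) := g₁.strictMono (E.strictMono (g₂.strictMono (E.strictMono l3)))
  set ε : ℝ := min (g₁ (E p) - p) (g₁ (E (g₂ (E p))) - p) with hεdef
  have hεpos : 0 < ε := lt_min (by linarith) (by linarith)
  have hεle1 : p + ε ≤ g₁ (E p) := by
    have := min_le_left (g₁ (E p) - p) (g₁ (E (g₂ (E p))) - p)
    rw [← hεdef] at this; linarith
  have hεle2 : p + ε ≤ g₁ (E (g₂ (E p))) := by
    have := min_le_right (g₁ (E p) - p) (g₁ (E (g₂ (E p))) - p)
    rw [← hεdef] at this; linarith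
  refine ⟨ε, hεpos, W, OrderIso.refl ℝ, hW, rfl, ?_⟩
  intro x c1 c2 c3
  rcases le_or_gt x eh with hxe | hxe
  · exact old_case g₁ g₂ g₃ E W (OrderIso.refl ℝ) p eh h hE domIff geq x hxe
  · have hWsymm_gt : ∀ t, p < t → E p < W.symm t := by
      intro t ht
      have : W.symm p < W.symm t := W.symm.strictMono ht
      rwa [show W.symm p = E p from W.symm_apply_eq.mpr hW.symm] at this
    have hg3 : g₃ x ≤ p := by
      by_contra hcon; push_neg at hcon
      rw [extFun_of_gt _ _ _ _ hcon] at c2 c3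
      simp only [OrderIso.refl_apply] at c2 c3
      rcases le_or_gt (g₂ (W.symm (g₃ x))) p with ht | ht
      · rw [extFun_of_le _ _ _ _ ht, ← hE _ ht] at c3
        have h2 : g₂ (E p) < g₂ (W.symm (g₃ x)) := g₂.strictMono (hWsymm_gt _ hcon)
        have h3 : g₁ (E (g₂ (E p))) < g₁ (E (g₂ (W.symm (g₃ x)))) :=
          g₁.strictMono (E.strictMono h2)
        linarith
      · rw [extFun_of_gt _ _ _ _ ht] at c3
        simp only [OrderIso.refl_apply] at c3
        have h4 : g₁ (E p) < g₁ (W.symm (g₂ (W.symm (g₃ x)))) :=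
          g₁.strictMono (hWsymm_gt _ ht)
        linarith
    rw [extFun_of_le _ _ _ _ hg3, ← hE _ hg3] at c2 c3 ⊢
    have hz_le : g₂ (E (g₃ x)) ≤ p := by
      by_contra hcon; push_neg at hcon
      rw [extFun_of_gt _ _ _ _ hcon] at c3
      simp only [OrderIso.refl_apply] at c3
      have h4 : g₁ (E p) < g₁ (W.symm (g₂ (E (g₃ x)))) := g₁.strictMono (hWsymm_gt _ hcon)
      linarith
    rw [extFun_of_le _ _ _ _ hz_le, ← hE _ hz_le] at c3 ⊢
    have hw_gt : p < g₁ (E (g₂ (E (g₃ x)))) := by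
      by_contra hcon; push_neg at hcon
      exact absurd ((domIff x).mp ⟨hg3, hz_le, hcon⟩) (not_le.mpr hxe)
    rw [extFun_of_gt _ _ _ _ hw_gt]
    simp only [OrderIso.refl_apply]
    rw [show g₁ (E (g₂ (E (g₃ x)))) = W x from (hWapp x).symm, W.symm_apply_apply]

end cases

/-- package: germ square root of an order iso fixing `p` -/
lemma sqrt_package (Ψfull : ℝ ≃o ℝ) (p : ℝ) (hΨp : Ψfull p = p) :
    ∃ ψ : ℝ ≃o ℝ, ψ p = p ∧ (∀ t, p < t → p < ψ t) ∧
      (∀ y, p ≤ y → y ≤ p + 1 → ψ (ψ y) = Ψfull y) := by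
  obtain ⟨Ψ', hid_le, hagree, u, hid_ge⟩ := truncate Ψfull p hΨp
  obtain ⟨ψ, hψψ, hbet⟩ := sqrt_any Ψ' p u (fun x hx => hid_le x hx) hid_ge
  have hΨ'p : Ψ' p = p := hid_le p le_rfl
  have hψp : ψ p = p := by
    have h1 := (hbet p).1
    have h2 := (hbet p).2
    rw [hΨ'p, min_self] at h1
    rw [hΨ'p, max_self] at h2
    exact le_antisymm h2 h1
  refine ⟨ψ, hψp, ?_, ?_⟩
  · intro t ht
    have h1 : p < Ψ' t := by
      have := Ψ'.strictMono ht; rwa [hΨ'p] at this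
    calc p < min t (Ψ' t) := lt_min ht h1
      _ ≤ ψ t := (hbet t).1
  · intro y h1 h2
    rw [hψψ y, hagree y h1 h2]

section cases2
variable (g₁ g₂ g₃ E : ℝ ≃o ℝ) (p eh : ℝ) (h : ℝ → ℝ)

/-- Case `a₃ = p`, `a₂ = p`, `a₁ < p`. -/
lemma case23
    (hE : ∀ x ≤ p, E x = h x)
    (domIff : ∀ x : ℝ, (g₃ x ≤ p ∧ g₂ (E (g₃ x)) ≤ p ∧ g₁ (E (g₂ (E (g₃ x)))) ≤ p) ↔ x ≤ eh)
    (geq : ∀ x : ℝ, g₃ x ≤ p → g₂ (E (g₃ x)) ≤ p → g₁ (E (g₂ (E (g₃ x)))) ≤ p →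
        E (g₁ (E (g₂ (E (g₃ x))))) = x)
    (e3 : g₃ eh = p) (e2 : g₂ (E (g₃ eh)) = p) (l1 : g₁ (E (g₂ (E (g₃ eh)))) < p) :
    ∃ ε : ℝ, 0 < ε ∧ ∃ W ψ : ℝ ≃o ℝ, W (E p) = p ∧ ψ p = p ∧
      ∀ x : ℝ, g₃ x ≤ p + ε → g₂ (extFun p h W ψ (g₃ x)) ≤ p + ε →
        g₁ (extFun p h W ψ (g₂ (extFun p h W ψ (g₃ x)))) ≤ p + ε →
        extFun p h W ψ (g₁ (extFun p h W ψ (g₂ (extFun p h W ψ (g₃ x))))) = x := by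
  obtain ⟨d1, d2, d3⟩ := (domIff eh).mpr le_rfl
  have hB1 : E (g₁ (E (g₂ (E (g₃ eh))))) = eh := geq eh d1 d2 d3
  have e2' : g₂ (E p) = p := by rw [e3] at e2; exact e2
  set Ψfull : ℝ ≃o ℝ := g₃.symm.trans (E.symm.trans (g₁.symm.trans g₂)) with hΨdef
  have hΨapp : ∀ z, Ψfull z = g₂ (g₁.symm (E.symm (g₃.symm z))) := fun z => rfl
  have hΨp : Ψfull p = p := by
    have h1 : g₃.symm p = eh := by rw [← e3, g₃.symm_apply_apply]
    have step1 : Ψfull p = g₂ (g₁.symm (E.symm eh)) := by rw [hΨapp, h1]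
    have step2 : E.symm eh = g₁ (E p) := by
      rw [← hB1, E.symm_apply_apply, e2]
    rw [step1, step2, g₁.symm_apply_apply, e2']
  obtain ⟨ψ, hψp, hψgt, hψψ⟩ := sqrt_package Ψfull p hΨp
  have hehq : eh < E p := by
    calc eh = E (g₁ (E (g₂ (E (g₃ eh))))) := hB1.symm
      _ < E p := E.strictMono l1
  have m1 : p < g₃ (E p) := by
    have := g₃.strictMono hehq
    rwa [e3] at this
  set ε : ℝ := min 1 (g₃ (E p) - p) with hεdef
  have hεpos : 0 < ε := lt_min one_pos (by linarith)
  have hεle1 : ε ≤ 1 := min_le_left _ _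
  have hεle2 : p + ε ≤ g₃ (E p) := by
    have := min_le_right 1 (g₃ (E p) - p)
    rw [← hεdef] at this; linarith
  refine ⟨ε, hεpos, g₂, ψ, e2', hψp, ?_⟩
  intro x c1 c2 c3
  rcases le_or_gt x eh with hxe | hxe
  · exact old_case g₁ g₂ g₃ E g₂ ψ p eh h hE domIff geq x hxe
  · have hg3 : p < g₃ x := by
      by_contra hcon; push_neg at hcon
      rw [← e3] at hcon
      exact absurd (g₃.le_iff_le.mp hcon) (not_le.mpr hxe)
    have hxq : x ≤ E p := by
      have : g₃ x ≤ g₃ (E p) := le_trans c1 hεle2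
      exact g₃.le_iff_le.mp this
    have hy1 : g₃ x ≤ p + 1 := le_trans c1 (by linarith)
    rw [extFun_of_gt _ _ _ _ hg3] at c2 ⊢
    rw [g₂.apply_symm_apply] at c2 ⊢
    have hψy : p < ψ (g₃ x) := hψgt _ hg3
    rw [extFun_of_gt _ _ _ _ hψy]
    rw [hψψ _ (le_of_lt hg3) hy1, hΨapp, g₂.symm_apply_apply,
      g₁.apply_symm_apply, g₃.symm_apply_apply]
    have hw_le : E.symm x ≤ p := by rw [E.symm_apply_le]; exact hxq
    rw [extFun_of_le _ _ _ _ hw_le, ← hE _ hw_le, E.apply_symm_apply]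

/-- Case `a₂ = p`, `a₁ = p`, `a₃ < p`. -/
lemma case12
    (hE : ∀ x ≤ p, E x = h x)
    (domIff : ∀ x : ℝ, (g₃ x ≤ p ∧ g₂ (E (g₃ x)) ≤ p ∧ g₁ (E (g₂ (E (g₃ x)))) ≤ p) ↔ x ≤ eh)
    (geq : ∀ x : ℝ, g₃ x ≤ p → g₂ (E (g₃ x)) ≤ p → g₁ (E (g₂ (E (g₃ x)))) ≤ p →
        E (g₁ (E (g₂ (E (g₃ x))))) = x)
    (l3 : g₃ eh < p) (e2 : g₂ (E (g₃ eh)) = p) (e1 : g₁ (E (g₂ (E (g₃ eh)))) = p) :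
    ∃ ε : ℝ, 0 < ε ∧ ∃ W ψ : ℝ ≃o ℝ, W (E p) = p ∧ ψ p = p ∧
      ∀ x : ℝ, g₃ x ≤ p + ε → g₂ (extFun p h W ψ (g₃ x)) ≤ p + ε →
        g₁ (extFun p h W ψ (g₂ (extFun p h W ψ (g₃ x)))) ≤ p + ε →
        extFun p h W ψ (g₁ (extFun p h W ψ (g₂ (extFun p h W ψ (g₃ x))))) = x := by
  obtain ⟨d1, d2, d3⟩ := (domIff eh).mpr le_rfl
  have hB1 : E (g₁ (E (g₂ (E (g₃ eh))))) = eh := geq eh d1 d2 d3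
  have hEpeh : E p = eh := by rw [e1] at hB1; exact hB1
  have e1' : g₁ (E p) = p := by rw [e2] at e1; exact e1
  set Ψfull : ℝ ≃o ℝ := g₂.symm.trans (E.symm.trans (g₃.symm.trans g₁)) with hΨdef
  have hΨapp : ∀ z, Ψfull z = g₁ (g₃.symm (E.symm (g₂.symm z))) := fun z => rfl
  have hΨp : Ψfull p = p := by
    rw [hΨapp]
    have h1 : g₂.symm p = E (g₃ eh) := g₂.symm_apply_eq.mpr e2.symm
    rw [h1, E.symm_apply_apply, g₃.symm_apply_apply, ← hEpeh, e1']
  obtain ⟨ψ, hψp, hψgt, hψψ⟩ := sqrt_package Ψfull p hΨp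
  have m1 : p < g₂ (E p) := by
    calc p = g₂ (E (g₃ eh)) := e2.symm
      _ < g₂ (E p) := g₂.strictMono (E.strictMono l3)
  set ε : ℝ := min 1 (g₂ (E p) - p) with hεdef
  have hεpos : 0 < ε := lt_min one_pos (by linarith)
  have hεle1 : ε ≤ 1 := min_le_left _ _
  have hεle2 : p + ε ≤ g₂ (E p) := by
    have := min_le_right 1 (g₂ (E p) - p)
    rw [← hεdef] at this; linarith
  have hg1symm : g₁.symm p = E p := g₁.symm_apply_eq.mpr e1'.symm
  refine ⟨ε, hεpos, g₁, ψ, e1', hψp, ?_⟩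
  intro x c1 c2 c3
  rcases le_or_gt x eh with hxe | hxe
  · exact old_case g₁ g₂ g₃ E g₁ ψ p eh h hE domIff geq x hxe
  · have hg3 : g₃ x ≤ p := by
      by_contra hcon; push_neg at hcon
      rw [extFun_of_gt _ _ _ _ hcon] at c2
      have h2 : E p < g₁.symm (ψ (g₃ x)) := by
        rw [← hg1symm]
        exact g₁.symm.strictMono (hψgt _ hcon)
      have h3 : g₂ (E p) < g₂ (g₁.symm (ψ (g₃ x))) := g₂.strictMono h2
      linarith
    rw [extFun_of_le _ _ _ _ hg3, ← hE _ hg3] at c2 c3 ⊢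
    have hz_gt : p < g₂ (E (g₃ x)) := by
      by_contra hcon; push_neg at hcon
      have h4 : g₁ (E (g₂ (E (g₃ x)))) ≤ p := by
        calc g₁ (E (g₂ (E (g₃ x)))) ≤ g₁ (E p) := g₁.monotone (E.monotone hcon)
          _ = p := e1'
      exact absurd ((domIff x).mp ⟨hg3, hcon, h4⟩) (not_le.mpr hxe)
    rw [extFun_of_gt _ _ _ _ hz_gt] at c3 ⊢
    rw [g₁.apply_symm_apply] at c3 ⊢
    have hψz : p < ψ (g₂ (E (g₃ x))) := hψgt _ hz_gt
    rw [extFun_of_gt _ _ _ _ hψz]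
    have hz1 : g₂ (E (g₃ x)) ≤ p + 1 := le_trans c2 (by linarith)
    rw [hψψ _ (le_of_lt hz_gt) hz1, hΨapp, g₁.symm_apply_apply, g₂.symm_apply_apply,
      E.symm_apply_apply, g₃.symm_apply_apply]

/-- Case `a₃ = p`, `a₁ = p`, `a₂ < p`. -/
lemma case13
    (hE : ∀ x ≤ p, E x = h x)
    (domIff : ∀ x : ℝ, (g₃ x ≤ p ∧ g₂ (E (g₃ x)) ≤ p ∧ g₁ (E (g₂ (E (g₃ x)))) ≤ p) ↔ x ≤ eh)
    (geq : ∀ x : ℝ, g₃ x ≤ p → g₂ (E (g₃ x)) ≤ p → g₁ (E (g₂ (E (g₃ x)))) ≤ p →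
        E (g₁ (E (g₂ (E (g₃ x))))) = x)
    (e3 : g₃ eh = p) (l2 : g₂ (E (g₃ eh)) < p) (e1 : g₁ (E (g₂ (E (g₃ eh)))) = p) :
    ∃ ε : ℝ, 0 < ε ∧ ∃ W ψ : ℝ ≃o ℝ, W (E p) = p ∧ ψ p = p ∧
      ∀ x : ℝ, g₃ x ≤ p + ε → g₂ (extFun p h W ψ (g₃ x)) ≤ p + ε →
        g₁ (extFun p h W ψ (g₂ (extFun p h W ψ (g₃ x)))) ≤ p + ε →
        extFun p h W ψ (g₁ (extFun p h W ψ (g₂ (extFun p h W ψ (g₃ x))))) = x := by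
  obtain ⟨d1, d2, d3⟩ := (domIff eh).mpr le_rfl
  have hB1 : E (g₁ (E (g₂ (E (g₃ eh))))) = eh := geq eh d1 d2 d3
  have hEpeh : E p = eh := by rw [e1] at hB1; exact hB1
  set W : ℝ ≃o ℝ := g₂.trans (E.trans g₁) with hWdef
  have hWapp : ∀ z, W z = g₁ (E (g₂ z)) := fun z => rfl
  have e1' : g₁ (E (g₂ (E p))) = p := by
    have h1 : E (g₃ eh) = E p := by rw [e3]
    rw [h1] at e1; exact e1
  have hW : W (E p) = p := by rw [hWapp]; exact e1'
  set Ψfull : ℝ ≃o ℝ := g₃.symm.trans W with hΨdef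
  have hΨapp : ∀ z, Ψfull z = W (g₃.symm z) := fun z => rfl
  have hΨp : Ψfull p = p := by
    rw [hΨapp]
    have h1 : g₃.symm p = eh := by rw [← e3, g₃.symm_apply_apply]
    rw [h1, ← hEpeh, hW]
  obtain ⟨ψ, hψp, hψgt, hψψ⟩ := sqrt_package Ψfull p hΨp
  have m1 : p < g₁ (E p) := by
    calc p = g₁ (E (g₂ (E (g₃ eh)))) := e1.symm
      _ < g₁ (E p) := g₁.strictMono (E.strictMono l2)
  set ε : ℝ := min 1 (g₁ (E p) - p) with hεdef
  have hεpos : 0 < ε := lt_min one_pos (by linarith)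
  have hεle1 : ε ≤ 1 := min_le_left _ _
  have hεle2 : p + ε ≤ g₁ (E p) := by
    have := min_le_right 1 (g₁ (E p) - p)
    rw [← hεdef] at this; linarith
  have hWsymm_gt : ∀ t, p < t → E p < W.symm t := by
    intro t ht
    have : W.symm p < W.symm t := W.symm.strictMono ht
    rwa [show W.symm p = E p from W.symm_apply_eq.mpr hW.symm] at this
  refine ⟨ε, hεpos, W, ψ, hW, hψp, ?_⟩
  intro x c1 c2 c3
  rcases le_or_gt x eh with hxe | hxe
  · exact old_case g₁ g₂ g₃ E W ψ p eh h hE domIff geq x hxe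
  · have hg3 : p < g₃ x := by
      by_contra hcon; push_neg at hcon
      rw [← e3] at hcon
      exact absurd (g₃.le_iff_le.mp hcon) (not_le.mpr hxe)
    have hy1 : g₃ x ≤ p + 1 := le_trans c1 (by linarith)
    rw [extFun_of_gt _ _ _ _ hg3] at c2 c3 ⊢
    have hψy : p < ψ (g₃ x) := hψgt _ hg3
    have hz_le : g₂ (W.symm (ψ (g₃ x))) ≤ p := by
      by_contra hcon; push_neg at hcon
      rw [extFun_of_gt _ _ _ _ hcon] at c3
      have h4 : g₁ (E p) < g₁ (W.symm (ψ (g₂ (W.symm (ψ (g₃ x)))))) :=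
        g₁.strictMono (hWsymm_gt _ (hψgt _ hcon))
      linarith
    rw [extFun_of_le _ _ _ _ hz_le, ← hE _ hz_le] at c3 ⊢
    have hEz : E (g₂ (W.symm (ψ (g₃ x)))) = g₁.symm (ψ (g₃ x)) := by
      have h5 : W (W.symm (ψ (g₃ x))) = ψ (g₃ x) := W.apply_symm_apply _
      rw [hWapp] at h5
      exact (g₁.symm_apply_eq.mpr h5.symm).symm
    rw [hEz, g₁.apply_symm_apply] at c3 ⊢
    rw [extFun_of_gt _ _ _ _ hψy]
    rw [hψψ _ (le_of_lt hg3) hy1, hΨapp, W.symm_apply_apply, g₃.symm_apply_apply]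

end cases2

end PSmain

lemma oi_lt_symm (f : ℝ ≃o ℝ) {a b : ℝ} : a < f.symm b ↔ f a < b := by
  constructor
  · intro h1; have := f.strictMono h1; rwa [f.apply_symm_apply] at this
  · intro h1; have := f.symm.strictMono h1; rwa [f.symm_apply_apply] at this

/-- Lemma: if `h : (-∞,p] → (-∞,h(p)]` is a partial solution of (E) and
`gᵢ(e_h) ≠ gⱼ(e_h)` for some `i,j`, then `h` extends to a partial solution on
`(-∞, p+ε]` for some `ε > 0`. -/
theorem partial_solution_extension (g₁ g₂ g₃ : ℝ ≃o ℝ) (p : ℝ) (h : ℝ → ℝ)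
    (hps : IsPartialSolution g₁ g₂ g₃ p h)
    (eh : ℝ) (heh : compDomain g₁ g₂ g₃ p h = Iic eh)
    (hne : ∃ i j : Fin 3, ![g₁, g₂, g₃] i eh ≠ ![g₁, g₂, g₃] j eh) :
    ∃ ε : ℝ, 0 < ε ∧ ∃ h' : ℝ → ℝ,
      IsPartialSolution g₁ g₂ g₃ (p + ε) h' ∧ ∀ x ≤ p, h' x = h x := by
  classical
  obtain ⟨hmono, hlower, heqn⟩ := hps
  -- globalize h to an order iso E
  have hle : ∀ x ≤ p, h x ≤ h p := by
    intro x hx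
    rcases eq_or_lt_of_le hx with he | hlt
    · rw [he]
    · exact le_of_lt (hmono (le_of_lt hlt) self_mem_Iic hlt)
  have hsur : ∀ y ≤ h p, ∃ x ≤ p, h x = y := by
    intro y hy
    have hq : h p ∈ h '' Iic p := ⟨p, self_mem_Iic, rfl⟩
    obtain ⟨x, hx, hxy⟩ := hlower hy hq
    exact ⟨x, hx, hxy⟩
  set H : ℝ → ℝ := fun x => if x ≤ p then h x else h p + (x - p) with hH
  have hHmono : StrictMono H := by
    intro a b hab
    rcases le_or_gt a p with ha | ha
    · rcases le_or_gt b p with hb | hb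
      · simp only [hH, if_pos ha, if_pos hb]
        exact hmono ha hb hab
      · simp only [hH, if_pos ha, if_neg (not_le.mpr hb)]
        have := hle a ha
        linarith
    · have hb : p < b := lt_trans ha hab
      simp only [hH, if_neg (not_le.mpr ha), if_neg (not_le.mpr hb)]
      linarith
  have hHsurj : Function.Surjective H := by
    intro y
    rcases le_or_gt y (h p) with hy | hy
    · obtain ⟨x, hx, hxy⟩ := hsur y hy
      exact ⟨x, by simp only [hH, if_pos hx]; exact hxy⟩
    · refine ⟨p + (y - h p), ?_⟩
      have : ¬ (p + (y - h p) ≤ p) := by push_neg; linarith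
      simp only [hH, if_neg this]
      ring
  set E : ℝ ≃o ℝ := StrictMono.orderIsoOfSurjective H hHmono hHsurj with hEdef
  have hEapp : ∀ x, E x = H x := fun x => by
    rw [hEdef, StrictMono.coe_orderIsoOfSurjective]
  have hE : ∀ x ≤ p, E x = h x := fun x hx => by
    rw [hEapp]; simp only [hH, if_pos hx]
  -- domain characterization in terms of E
  have domIff : ∀ x : ℝ,
      (g₃ x ≤ p ∧ g₂ (E (g₃ x)) ≤ p ∧ g₁ (E (g₂ (E (g₃ x)))) ≤ p) ↔ x ≤ eh := by
    intro x
    have hmem := Set.ext_iff.mp heh x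
    constructor
    · rintro ⟨c1, c2, c3⟩
      apply hmem.mp
      refine ⟨c1, ?_, ?_⟩
      · rwa [← hE _ c1]
      · rw [← hE _ c1]
        rwa [← hE _ c2]
    · intro hx
      obtain ⟨c1, c2, c3⟩ := hmem.mpr hx
      rw [← hE _ c1] at c2 c3
      refine ⟨c1, c2, ?_⟩
      rwa [← hE _ c2] at c3
  have geq : ∀ x : ℝ, g₃ x ≤ p → g₂ (E (g₃ x)) ≤ p → g₁ (E (g₂ (E (g₃ x)))) ≤ p →
      E (g₁ (E (g₂ (E (g₃ x))))) = x := by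
    intro x c1 c2 c3
    have c2' : g₂ (h (g₃ x)) ≤ p := by rwa [← hE _ c1]
    have c3' : g₁ (h (g₂ (h (g₃ x)))) ≤ p := by rw [← hE _ c1]; rwa [← hE _ c2]
    have heq2 := heqn x c1 c2' c3'
    rw [← hE _ c1, ← hE _ c2, ← hE _ c3] at heq2
    exact heq2
  obtain ⟨d1, d2, d3⟩ := (domIff eh).mpr le_rfl
  -- finish from a case lemma output
  have finish : (∃ ε : ℝ, 0 < ε ∧ ∃ W ψ : ℝ ≃o ℝ, W (E p) = p ∧ ψ p = p ∧
      ∀ x : ℝ, g₃ x ≤ p + ε → g₂ (extFun p h W ψ (g₃ x)) ≤ p + ε →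
        g₁ (extFun p h W ψ (g₂ (extFun p h W ψ (g₃ x)))) ≤ p + ε →
        extFun p h W ψ (g₁ (extFun p h W ψ (g₂ (extFun p h W ψ (g₃ x))))) = x) →
      ∃ ε : ℝ, 0 < ε ∧ ∃ h' : ℝ → ℝ,
        IsPartialSolution g₁ g₂ g₃ (p + ε) h' ∧ ∀ x ≤ p, h' x = h x := by
    rintro ⟨ε, hε, W, ψ, hW, hψ, heqx⟩
    obtain ⟨hps', hagree⟩ := build_main g₁ g₂ g₃ p h E W ψ hE hW hψ ε hε heqx
    exact ⟨ε, hε, extFun p h W ψ, hps', hagree⟩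
  rcases eq_or_lt_of_le d1 with s3 | t3
  · rcases eq_or_lt_of_le d2 with s2 | t2
    · rcases eq_or_lt_of_le d3 with s1 | t1
      · -- triple case: contradiction with hne
        exfalso
        have hB1 : E (g₁ (E (g₂ (E (g₃ eh))))) = eh := geq eh d1 d2 d3
        have hq : E p = eh := by rw [s1] at hB1; exact hB1
        have hv3 : g₃ eh = p := s3
        have s2' : g₂ (E p) = p := by rw [s3] at s2; exact s2
        have hv2 : g₂ eh = p := by rw [← hq]; exact s2'
        have hv1 : g₁ eh = p := by
          rw [← hq]
          have s1' := s1
          rw [s3, s2'] at s1'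
          exact s1'
        obtain ⟨i, j, hij⟩ := hne
        apply hij
        have hall : ∀ k : Fin 3, ![g₁, g₂, g₃] k eh = p := by
          intro k
          fin_cases k
          · simpa using hv1
          · simpa using hv2
          · simpa using hv3
        rw [hall i, hall j]
      · exact finish (case23 g₁ g₂ g₃ E p eh h hE domIff geq s3 s2 t1)
    · rcases eq_or_lt_of_le d3 with s1 | t1
      · exact finish (case13 g₁ g₂ g₃ E p eh h hE domIff geq s3 t2 s1)
      · exact finish (case3 g₁ g₂ g₃ E p eh h hE domIff geq s3 t2 t1)
  · rcases eq_or_lt_of_le d2 with s2 | t2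
    · rcases eq_or_lt_of_le d3 with s1 | t1
      · exact finish (case12 g₁ g₂ g₃ E p eh h hE domIff geq t3 s2 s1)
      · exact finish (case2 g₁ g₂ g₃ E p eh h hE domIff geq t3 s2 t1)
    · rcases eq_or_lt_of_le d3 with s1 | t1
      · exact finish (case1 g₁ g₂ g₃ E p eh h hE domIff geq t3 t2 s1)
      · -- no slot binds: contradiction
        exfalso
        have hxgt : eh < min (g₃.symm p) (min (g₃.symm (E.symm (g₂.symm p)))
            (g₃.symm (E.symm (g₂.symm (E.symm (g₁.symm p)))))) := by
          refine lt_min ?_ (lt_min ?_ ?_)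
          · rw [oi_lt_symm]; exact t3
          · rw [oi_lt_symm, oi_lt_symm, oi_lt_symm]; exact t2
          · rw [oi_lt_symm, oi_lt_symm, oi_lt_symm, oi_lt_symm, oi_lt_symm]
            exact t1
        set x := min (g₃.symm p) (min (g₃.symm (E.symm (g₂.symm p)))
            (g₃.symm (E.symm (g₂.symm (E.symm (g₁.symm p)))))) with hxdef
        have hc1 : g₃ x ≤ p := by
          rw [← g₃.le_symm_apply]
          exact min_le_left _ _
        have hc2 : g₂ (E (g₃ x)) ≤ p := by
          rw [← g₂.le_symm_apply, ← E.le_symm_apply, ← g₃.le_symm_apply]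
          exact le_trans (min_le_right _ _) (min_le_left _ _)
        have hc3 : g₁ (E (g₂ (E (g₃ x)))) ≤ p := by
          rw [← g₁.le_symm_apply, ← E.le_symm_apply, ← g₂.le_symm_apply, ← E.le_symm_apply,
            ← g₃.le_symm_apply]
          exact le_trans (min_le_right _ _) (min_le_right _ _)
        exact absurd ((domIff x).mp ⟨hc1, hc2, hc3⟩) (not_le.mpr hxgt)
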